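/- arXiv:1807.02574 — 3 statements merged into one kernel-verified Lean document; each statement's English description precedes it below -/
import Mathlib

section
/- Let H = (C,F,D,G) be a hybrid system on X ⊆ ℝ^n such that F is outer semicontinuous on C with nonempty convex values and locally bounded on C, and G has nonempty values on D. Let p be an atomic proposition whose truth set K = {x ∈ X : p(x) = 1} is closed and satisfies K ⊆ C ∪ D. Suppose there exists a continuously differentiable barrier function candidate B with respect to K for H, an open neighborhood U of the boundary ∂K of K, such that: (1) ⟨∇B(x), η⟩ ≤ 0 for every x ∈ C ∩ (U \ K) and every η ∈ F(x) ∩ T_C(x); (2) B(η) ≤ 0 for every x ∈ D ∩ K and every η ∈ G(x); and (3) G(D ∩ K) ⊆ C ∪ D. Then every maximal solution φ to H with φ(0,0) ∈ K satisfies the formula □p at every (t,j) ∈ dom φ; in particular, φ(t,j) ∈ K for all (t,j) ∈ dom φ. -/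
open Set Filter Topology MeasureTheory
open scoped ENNReal NNReal

noncomputable section

/-- The state space `ℝⁿ`. -/
abbrev ES (n : ℕ) := EuclideanSpace ℝ (Fin n)

/-- A hybrid system `H = (C,F,D,G)` on a state space `X ⊆ ℝⁿ`. -/
structure HybridSystem (n : ℕ) where
  X : Set (ES n)
  C : Set (ES n)
  F : ES n → Set (ES n)
  D : Set (ES n)
  G : ES n → Set (ES n)
  C_subset_X : C ⊆ X
  D_subset_X : D ⊆ X
  data_subset_X : closure C ∪ D ∪ (⋃ x ∈ D, G x) ⊆ X

/-- A hybrid time domain `E ⊆ [0,∞) × ℕ`. -/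
def IsHybridTimeDomain (E : Set (ℝ × ℕ)) : Prop :=
  (∀ q ∈ E, 0 ≤ q.1) ∧
  ∀ q ∈ E, ∃ τ : ℕ → ℝ, τ 0 = 0 ∧ τ (q.2 + 1) = q.1 ∧
    (∀ i : ℕ, i ≤ q.2 → τ i ≤ τ (i + 1)) ∧
    (∀ s : ℝ, ∀ j : ℕ, ((s, j) ∈ E ∧ s ≤ q.1 ∧ j ≤ q.2) ↔ (j ≤ q.2 ∧ τ j ≤ s ∧ s ≤ τ (j + 1)))

/-- A hybrid arc: a function defined on a hybrid time domain. -/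
structure HybridArc (n : ℕ) where
  dom : Set (ℝ × ℕ)
  toFun : ℝ → ℕ → ES n
  htd : IsHybridTimeDomain dom
  zero_mem : ((0 : ℝ), (0 : ℕ)) ∈ dom

variable {n : ℕ}

/-- `s` is a solution to the hybrid system `H`: the initial condition lies in
`closure C ∪ D`; on each interval `I^j` the arc is (locally) absolutely continuous,
i.e. it is the integral of an integrable selection `f` with `f t ∈ F (φ t j)` a.e.,
and `φ t j ∈ C` on the interior of `I^j`; and jumps satisfy the jump conditions. -/
structure IsSolution (H : HybridSystem n) (s : HybridArc n) : Prop where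
  init : s.toFun 0 0 ∈ closure H.C ∪ H.D
  flow : ∀ j : ℕ, ∃ f : ℝ → ES n,
    (∀ t ∈ interior {t : ℝ | (t, j) ∈ s.dom}, s.toFun t j ∈ H.C) ∧
    (∀ᵐ t ∂volume, (t, j) ∈ s.dom → f t ∈ H.F (s.toFun t j)) ∧
    (∀ a b : ℝ, (a, j) ∈ s.dom → (b, j) ∈ s.dom →
      IntervalIntegrable f volume a b ∧ s.toFun b j = s.toFun a j + ∫ u in a..b, f u)
  jump : ∀ t : ℝ, ∀ j : ℕ, (t, j) ∈ s.dom → (t, j + 1) ∈ s.dom →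
    s.toFun t j ∈ H.D ∧ s.toFun t (j + 1) ∈ H.G (s.toFun t j)

/-- `s` is a maximal solution to `H`: it is a solution that is not a proper
restriction of another solution. -/
def IsMaximal (H : HybridSystem n) (s : HybridArc n) : Prop :=
  IsSolution H s ∧
  ∀ s' : HybridArc n, IsSolution H s' → s.dom ⊆ s'.dom →
    (∀ q ∈ s.dom, s'.toFun q.1 q.2 = s.toFun q.1 q.2) → s'.dom = s.dom

/-- `s` satisfies `□ p` at `(t,j)`, where `K` is the truth set of `p`. -/
def SatAlwaysAt (s : HybridArc n) (K : Set (ES n)) (t : ℝ) (j : ℕ) : Prop :=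
  ∀ t' : ℝ, ∀ j' : ℕ, (t', j') ∈ s.dom → t + (j : ℝ) ≤ t' + (j' : ℝ) → s.toFun t' j' ∈ K

/-- `s` satisfies `◇ p` at `(t,j)`, where `K` is the truth set of `p`. -/
def SatEventuallyAt (s : HybridArc n) (K : Set (ES n)) (t : ℝ) (j : ℕ) : Prop :=
  ∃ t' : ℝ, ∃ j' : ℕ, (t', j') ∈ s.dom ∧ t + (j : ℝ) ≤ t' + (j' : ℝ) ∧ s.toFun t' j' ∈ K

/-- `s` satisfies `○ p` at `(t,j)`, where `K` is the truth set of `p`. -/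
def SatNextAt (s : HybridArc n) (K : Set (ES n)) (t : ℝ) (j : ℕ) : Prop :=
  (t, j + 1) ∈ s.dom ∧ s.toFun t (j + 1) ∈ K

/-- `s` satisfies `p U_s q` at `(t,j)`, where `P`, `Q` are the truth sets of `p`, `q`. -/
def SatUntilSAt (s : HybridArc n) (P Q : Set (ES n)) (t : ℝ) (j : ℕ) : Prop :=
  ∃ t' : ℝ, ∃ j' : ℕ, (t', j') ∈ s.dom ∧ t + (j : ℝ) ≤ t' + (j' : ℝ) ∧ s.toFun t' j' ∈ Q ∧
    ∀ t'' : ℝ, ∀ j'' : ℕ, (t'', j'') ∈ s.dom →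
      t + (j : ℝ) ≤ t'' + (j'' : ℝ) → t'' + (j'' : ℝ) < t' + (j' : ℝ) → s.toFun t'' j'' ∈ P

/-- `s` satisfies `p U_w q` at `(t,j)`. -/
def SatUntilWAt (s : HybridArc n) (P Q : Set (ES n)) (t : ℝ) (j : ℕ) : Prop :=
  (∀ t' : ℝ, ∀ j' : ℕ, (t', j') ∈ s.dom → t + (j : ℝ) ≤ t' + (j' : ℝ) → s.toFun t' j' ∈ P) ∨
  SatUntilSAt s P Q t j

/-- `s` satisfies `◇ □ p` at `(t,j)`, where `K` is the truth set of `p`. -/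
def SatEvAlwaysAt (s : HybridArc n) (K : Set (ES n)) (t : ℝ) (j : ℕ) : Prop :=
  ∃ t' : ℝ, ∃ j' : ℕ, (t', j') ∈ s.dom ∧ t + (j : ℝ) ≤ t' + (j' : ℝ) ∧
    ∀ t'' : ℝ, ∀ j'' : ℕ, (t'', j'') ∈ s.dom → t' + (j' : ℝ) ≤ t'' + (j'' : ℝ) →
      s.toFun t'' j'' ∈ K

/-- The settling time `T(φ) = inf {t+j : (t,j) ∈ dom φ, φ(t,j) ∈ K}` (with `inf ∅ = ∞`). -/
def settlingTime (s : HybridArc n) (K : Set (ES n)) : ℝ≥0∞ :=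
  sInf {e : ℝ≥0∞ | ∃ t : ℝ, ∃ j : ℕ, (t, j) ∈ s.dom ∧ s.toFun t j ∈ K ∧
    e = ENNReal.ofReal (t + (j : ℝ))}

/-- `sup_{(t,j) ∈ dom φ} (t + j)`. -/
def domSupTJ (s : HybridArc n) : ℝ≥0∞ := ⨆ q ∈ s.dom, ENNReal.ofReal (q.1 + (q.2 : ℝ))

/-- `sup_{(t,j) ∈ dom φ} t`. -/
def domSupT (s : HybridArc n) : ℝ≥0∞ := ⨆ q ∈ s.dom, ENNReal.ofReal q.1

/-- `sup_{(t,j) ∈ dom φ} j`. -/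
def domSupJ (s : HybridArc n) : ℝ≥0∞ := ⨆ q ∈ s.dom, (q.2 : ℝ≥0∞)

/-- The closed set `K` is finite time attractive (FTA) for `H` with respect to `O`:
every maximal solution from `O` satisfies `sup_{(t,j) ∈ dom φ} (t+j) ≥ T(φ)` and
`dist(φ(t,j),K) → 0` as `t+j ↗ T(φ)` along `(t,j) ∈ dom φ`. -/
def FTAwrt (H : HybridSystem n) (K O : Set (ES n)) : Prop :=
  ∀ s : HybridArc n, IsMaximal H s → s.toFun 0 0 ∈ O →
    settlingTime s K ≤ domSupTJ s ∧
    Tendsto (fun q : ℝ × ℕ => Metric.infDist (s.toFun q.1 q.2) K)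
      ((Filter.comap (fun q : ℝ × ℕ => ENNReal.ofReal (q.1 + (q.2 : ℝ)))
        (𝓝[<] (settlingTime s K))) ⊓ 𝓟 s.dom) (𝓝 0)

/-- The Clarke generalized directional derivative
`V°(x,v) = limsup_{y → x, h ↓ 0} (V(y + h v) − V(y))/h`. -/
def clarkeDeriv (V : ES n → ℝ) (x v : ES n) : ℝ :=
  limsup (fun q : ES n × ℝ => (V (q.1 + q.2 • v) - V q.1) / q.2) ((𝓝 x) ×ˢ (𝓝[>] (0 : ℝ)))

/-- `u_C(x) ≤ b`, i.e. `sup_{v ∈ F(x)} V°(x,v) ≤ b`. -/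
def uC_le (H : HybridSystem n) (V : ES n → ℝ) (x : ES n) (b : ℝ) : Prop :=
  ∀ v ∈ H.F x, clarkeDeriv V x v ≤ b

/-- `u_D(x) ≤ b`, i.e. `sup_{ζ ∈ G(x)} V(ζ) − V(x) ≤ b`. -/
def uD_le (H : HybridSystem n) (V : ES n → ℝ) (x : ES n) (b : ℝ) : Prop :=
  ∀ ζ ∈ H.G x, V ζ - V x ≤ b

/-- `V` is positive definite with respect to `K` (on `N`). -/
def PosDefWrt (V : ES n → ℝ) (K N : Set (ES n)) : Prop :=
  (∀ x ∈ K ∩ N, V x = 0) ∧ ∀ x ∈ N \ K, 0 < V x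

/-- `V` is locally Lipschitz on an open neighborhood of `S`. -/
def LocallyLipschitzOnNhdOf (V : ES n → ℝ) (S : Set (ES n)) : Prop :=
  ∃ U : Set (ES n), IsOpen U ∧ S ⊆ U ∧
    ∀ x ∈ U, ∃ L : ℝ≥0, ∃ W ∈ 𝓝 x, LipschitzOnWith L V W

/-- The sublevel set `L_V(r) = {x ∈ N : V(x) ≤ r}` for `r ∈ [0,∞]`. -/
def sublevel (V : ES n → ℝ) (N : Set (ES n)) (r : ℝ≥0∞) : Set (ES n) :=
  {x ∈ N | ENNReal.ofReal (V x) ≤ r}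

/-- `F` is outer semicontinuous on `S`. -/
def OuterSemicontinuousOn (F : ES n → Set (ES n)) (S : Set (ES n)) : Prop :=
  ∀ x ∈ S, ∀ xs : ℕ → ES n, ∀ ys : ℕ → ES n, (∀ i, xs i ∈ S) → (∀ i, ys i ∈ F (xs i)) →
    Tendsto xs atTop (𝓝 x) → ∀ y : ES n, Tendsto ys atTop (𝓝 y) → y ∈ F x

/-- `F` is locally bounded on `S`. -/
def LocallyBoundedOn (F : ES n → Set (ES n)) (S : Set (ES n)) : Prop :=
  ∀ x ∈ S, ∃ U ∈ 𝓝 x, Bornology.IsBounded (⋃ z ∈ U ∩ S, F z)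

/-- The (Bouligand) tangent cone `T_S(x)`: all `w` for which there exist `x_i ∈ S`,
`x_i → x`, `τ_i > 0`, `τ_i ↓ 0` with `(x_i − x)/τ_i → w`. -/
def BouligandTangentCone (S : Set (ES n)) (x : ES n) : Set (ES n) :=
  {w | ∃ xs : ℕ → ES n, ∃ τ : ℕ → ℝ, (∀ i, xs i ∈ S) ∧ (∀ i, 0 < τ i) ∧
    Tendsto xs atTop (𝓝 x) ∧ Tendsto τ atTop (𝓝 0) ∧
    Tendsto (fun i => (τ i)⁻¹ • (xs i - x)) atTop (𝓝 w)}

/-- `B` is a barrier function candidate with respect to `K` for `H`. -/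
def BarrierCandidate (H : HybridSystem n) (B : ES n → ℝ) (K : Set (ES n)) : Prop :=
  (∀ x ∈ K, B x ≤ 0) ∧
  ∀ x ∈ (H.C ∪ H.D ∪ ⋃ y ∈ H.D, H.G y) \ K, 0 < B x

/-- The set-valued map `F` is locally Lipschitz on `S`. -/
def SetValuedLocallyLipschitzOn (F : ES n → Set (ES n)) (S : Set (ES n)) : Prop :=
  ∀ x ∈ S, ∃ L : ℝ, 0 ≤ L ∧ ∃ U ∈ 𝓝 x,
    ∀ y ∈ U ∩ S, ∀ z ∈ U ∩ S, ∀ v ∈ F y, ∃ w ∈ F z, ‖v - w‖ ≤ L * ‖y - z‖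



/-- Real-induction lemma: if `g` is continuous on `[c,d]`, `g c ≤ 0`, and at every
point of `[c,d)` where `g > 0` the function has arbitrarily small right increments
with slope `≤ ε` for every `ε > 0`, then `g ≤ 0` on `[c,d]`. -/
lemma dini_le_zero {g : ℝ → ℝ} {c d : ℝ} (hcd : c ≤ d) (hg : ContinuousOn g (Icc c d))
    (hdini : ∀ t, c ≤ t → t < d → 0 < g t → ∀ ε > (0:ℝ), ∀ δ > (0:ℝ),
      ∃ h : ℝ, 0 < h ∧ h < δ ∧ g (t + h) ≤ g t + ε * h)
    (hgc : g c ≤ 0) : ∀ t ∈ Icc c d, g t ≤ 0 := by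
  by_contra hcon
  push_neg at hcon
  obtain ⟨t1, ht1, hgt1⟩ := hcon
  -- sup of the set where g ≤ 0 before t1
  set A : Set ℝ := {t ∈ Icc c t1 | g t ≤ 0} with hA
  have hcA : c ∈ A := ⟨⟨le_rfl, ht1.1⟩, hgc⟩
  have hAne : A.Nonempty := ⟨c, hcA⟩
  have hAbdd : BddAbove A := ⟨t1, fun x hx => hx.1.2⟩
  set t0 := sSup A with ht0
  have ht0mem : t0 ∈ Icc c t1 := ⟨le_csSup hAbdd hcA, csSup_le hAne fun x hx => hx.1.2⟩
  have hsubIcc : A ⊆ Icc c d := fun x hx => ⟨hx.1.1, hx.1.2.trans ht1.2⟩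
  have ht0Icc : t0 ∈ Icc c d := ⟨ht0mem.1, ht0mem.2.trans ht1.2⟩
  have hgt0 : g t0 ≤ 0 := by
    have hcl : t0 ∈ closure A := csSup_mem_closure hAne hAbdd
    have hcw : ContinuousWithinAt g A t0 := (hg t0 ht0Icc).mono hsubIcc
    have := hcw.mem_closure_image hcl
    have hsub : g '' A ⊆ Iic 0 := by rintro y ⟨x, hx, rfl⟩; exact hx.2
    have : g t0 ∈ closure (Iic (0:ℝ)) := closure_mono hsub this
    rwa [isClosed_Iic.closure_eq] at this
  have ht0lt : t0 < t1 := lt_of_le_of_ne ht0mem.2 (fun h => by rw [h] at hgt0; linarith)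
  have hpos : ∀ u, t0 < u → u ≤ t1 → 0 < g u := by
    intro u hu1 hu2
    by_contra hle
    push_neg at hle
    have : u ∈ A := ⟨⟨ht0mem.1.trans hu1.le, hu2⟩, hle⟩
    exact absurd (le_csSup hAbdd this) (not_le.mpr hu1)
  -- choose t2 ∈ (t0, t1) with g t2 ≤ g t1 / 2
  have hcwt0 : ContinuousWithinAt g (Icc c d) t0 := hg t0 ht0Icc
  obtain ⟨δ0, hδ0, hδ0p⟩ : ∃ δ0 > (0:ℝ), ∀ u ∈ Icc c d, |u - t0| < δ0 → g u < g t1 / 2 := by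
    have : ∀ᶠ u in 𝓝[Icc c d] t0, g u < g t1 / 2 :=
      hcwt0.eventually_lt continuousWithinAt_const (by linarith)
    rw [nhdsWithin, eventually_inf_principal] at this
    rw [Metric.eventually_nhds_iff] at this
    obtain ⟨δ0, hδ0, hd⟩ := this
    exact ⟨δ0, hδ0, fun u hu hd' => hd (by simpa [Real.dist_eq] using hd') hu⟩
  set t2 := min (t0 + δ0 / 2) ((t0 + t1) / 2) with ht2
  have ht2gt : t0 < t2 := lt_min (by linarith) (by linarith)
  have ht2lt : t2 < t1 := min_lt_of_right_lt (by linarith)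
  have ht2Icc : t2 ∈ Icc c d := ⟨ht0mem.1.trans ht2gt.le, (ht2lt.le.trans ht1.2)⟩
  have hgt2 : g t2 < g t1 / 2 := hδ0p t2 ht2Icc (by
    rw [abs_sub_lt_iff]
    constructor
    · have : t2 ≤ t0 + δ0 / 2 := min_le_left _ _
      linarith
    · linarith)
  -- slope argument on [t2, t1]
  set ε := (g t1 - g t2) / (2 * (t1 - t2)) with hε
  have hεpos : 0 < ε := by
    apply div_pos (by linarith) (by linarith)
  set S : Set ℝ := {u ∈ Icc t2 t1 | g u - g t2 - ε * (u - t2) ≤ 0} with hS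
  have ht2S : t2 ∈ S := ⟨⟨le_rfl, ht2lt.le⟩, by simp⟩
  have hSne : S.Nonempty := ⟨t2, ht2S⟩
  have hSbdd : BddAbove S := ⟨t1, fun x hx => hx.1.2⟩
  set m := sSup S with hm
  have hmmem : m ∈ Icc t2 t1 := ⟨le_csSup hSbdd ht2S, csSup_le hSne fun x hx => hx.1.2⟩
  have hmIcc : m ∈ Icc c d := ⟨ht2Icc.1.trans hmmem.1, hmmem.2.trans ht1.2⟩
  have hψm : g m - g t2 - ε * (m - t2) ≤ 0 := by
    have hcl : m ∈ closure S := csSup_mem_closure hSne hSbdd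
    have hsubS : S ⊆ Icc c d := fun x hx =>
      ⟨ht2Icc.1.trans hx.1.1, hx.1.2.trans ht1.2⟩
    have hcw : ContinuousWithinAt (fun u => g u - g t2 - ε * (u - t2)) S m :=
      (((hg m hmIcc).mono hsubS).sub continuousWithinAt_const).sub
        (continuousWithinAt_const.mul ((continuousWithinAt_id).sub continuousWithinAt_const))
    have := hcw.mem_closure_image hcl
    have hsub : (fun u => g u - g t2 - ε * (u - t2)) '' S ⊆ Iic 0 := by
      rintro y ⟨x, hx, rfl⟩; exact hx.2
    have h2 : g m - g t2 - ε * (m - t2) ∈ closure (Iic (0:ℝ)) := closure_mono hsub this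
    rwa [isClosed_Iic.closure_eq] at h2
  have hmlt : m < t1 := by
    rcases lt_or_eq_of_le hmmem.2 with h | h
    · exact h
    · exfalso
      rw [h] at hψm
      have h2 : ε * (2 * (t1 - t2)) = g t1 - g t2 := by
        rw [hε]; exact div_mul_cancel₀ _ (by nlinarith)
      nlinarith
  have hgm : 0 < g m := hpos m (ht2gt.trans_le hmmem.1) hmmem.2
  obtain ⟨h, hh0, hhlt, hstep⟩ := hdini m (ht0Icc.1.trans (ht2gt.le.trans hmmem.1))
    (lt_of_lt_of_le hmlt ht1.2) hgm ε hεpos (t1 - m) (by linarith)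
  have hmhS : m + h ∈ S := by
    refine ⟨⟨hmmem.1.trans (by linarith), by linarith⟩, ?_⟩
    have := hψm
    nlinarith
  have := le_csSup hSbdd hmhS
  linarith

section Aux
variable {n : ℕ}

/-- Outer semicontinuity implies closed values. -/
lemma osc_closed_value {F : ES n → Set (ES n)} {S : Set (ES n)}
    (hF : OuterSemicontinuousOn F S) {x : ES n} (hx : x ∈ S) : IsClosed (F x) := by
  rw [← isSeqClosed_iff_isClosed]
  intro ys y hys hy
  exact hF x hx (fun _ => x) ys (fun _ => hx) hys tendsto_const_nhds y hy

/-- OSC + local boundedness gives ε-δ upper semicontinuity into cthickenings. -/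
lemma osc_usc {F : ES n → Set (ES n)} {S : Set (ES n)}
    (hF : OuterSemicontinuousOn F S) (hlb : LocallyBoundedOn F S)
    {x : ES n} (hx : x ∈ S) :
    ∀ ε > (0:ℝ), ∃ ρ > (0:ℝ), ∀ z ∈ S, dist z x < ρ →
      F z ⊆ Metric.cthickening ε (F x) := by
  intro ε hε
  by_contra hcon
  push_neg at hcon
  have hseq : ∀ i : ℕ, ∃ z ∈ S, dist z x < 1 / (i + 1) ∧
      ∃ w ∈ F z, w ∉ Metric.cthickening ε (F x) := by
    intro i
    obtain ⟨z, hz, hd, hsub⟩ := hcon (1 / (i + 1)) (by positivity)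
    rw [Set.not_subset] at hsub
    obtain ⟨w, hw, hw2⟩ := hsub
    exact ⟨z, hz, hd, w, hw, hw2⟩
  choose z hzS hzd w hwF hwnot using hseq
  have hztend : Tendsto z atTop (𝓝 x) := by
    rw [tendsto_iff_dist_tendsto_zero]
    apply squeeze_zero (fun i => dist_nonneg) (fun i => (hzd i).le)
    exact tendsto_one_div_add_atTop_nhds_zero_nat
  obtain ⟨V, hV, hVb⟩ := hlb x hx
  obtain ⟨i₀, hi₀⟩ := (hztend.eventually_mem hV).exists_forall_of_atTop
  have hwmem : ∀ i : ℕ, w (i + i₀) ∈ ⋃ y ∈ V ∩ S, F y := fun i =>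
    Set.mem_biUnion ⟨hi₀ (i + i₀) (Nat.le_add_left _ _), hzS _⟩ (hwF _)
  obtain ⟨a, -, σ, hσ, hatend⟩ := tendsto_subseq_of_bounded hVb hwmem
  have hidx : Tendsto (fun i => σ i + i₀) atTop atTop :=
    tendsto_atTop_mono (fun i => Nat.le_add_right _ _) hσ.tendsto_atTop
  have haF : a ∈ F x :=
    hF x hx (fun i => z (σ i + i₀)) (fun i => w (σ i + i₀)) (fun i => hzS _)
      (fun i => hwF _) (hztend.comp hidx) a hatend
  have hlim : Tendsto (fun i => EMetric.infEdist (w (σ i + i₀)) (F x)) atTop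
      (𝓝 (EMetric.infEdist a (F x))) :=
    (EMetric.continuous_infEdist.tendsto a).comp hatend
  have hge : ENNReal.ofReal ε ≤ EMetric.infEdist a (F x) := by
    refine ge_of_tendsto hlim (Filter.Eventually.of_forall fun i => ?_)
    have := hwnot (σ i + i₀)
    rw [Metric.mem_cthickening_iff] at this
    exact (not_le.mp this).le
  rw [show EMetric.infEdist a (F x) = 0 from EMetric.infEdist_zero_of_mem haF] at hge
  exact absurd hge (by simp [hε])

end Aux
lemma cw_nhd {α : Type*} [TopologicalSpace α] {ψ : ℝ → α} {s : Set ℝ} {t : ℝ}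
    (hψ : ContinuousWithinAt ψ s t) {V : Set α} (hV : V ∈ 𝓝 (ψ t)) :
    ∃ η > (0:ℝ), ∀ u ∈ s, |u - t| < η → ψ u ∈ V := by
  have h2 : ψ ⁻¹' V ∈ 𝓝[s] t := hψ hV
  rw [Metric.mem_nhdsWithin_iff] at h2
  obtain ⟨η, hη, hsub⟩ := h2
  exact ⟨η, hη, fun u hu hd => hsub ⟨by simpa [Metric.mem_ball, Real.dist_eq] using hd, hu⟩⟩

lemma dini_step {n : ℕ} {H : HybridSystem n}
    (hFosc : OuterSemicontinuousOn H.F H.C)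
    (hFconv : ∀ x ∈ H.C, Convex ℝ (H.F x))
    (hFlb : LocallyBoundedOn H.F H.C)
    {B : ES n → ℝ} (hB : ContDiff ℝ 1 B) {U K : Set (ES n)}
    (h1 : ∀ x ∈ H.C ∩ (U \ K), ∀ η ∈ H.F x ∩ BouligandTangentCone H.C x,
      fderiv ℝ B x η ≤ 0)
    {ψ : ℝ → ES n} {f : ℝ → ES n} {a b : ℝ}
    (hcont : ContinuousOn ψ (Icc a b))
    (hC' : ∀ u, a < u → u < b → ψ u ∈ H.C)
    (haeF : ∀ᵐ u ∂volume, u ∈ Ioo a b → f u ∈ H.F (ψ u))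
    (hsub : ∀ u v, a ≤ u → u ≤ v → v ≤ b → ψ v - ψ u = ∫ w in u..v, f w)
    (hint : ∀ u v, a ≤ u → u ≤ v → v ≤ b → IntervalIntegrable f volume u v)
    {t : ℝ} (hta : a < t) (htb : t < b) (htU : ψ t ∈ U) (htK : ψ t ∉ K) :
    ∀ ε > (0:ℝ), ∀ δ > (0:ℝ), ∃ h : ℝ, 0 < h ∧ h < δ ∧
      B (ψ (t + h)) ≤ B (ψ t) + ε * h := by
  intro ε hε δ hδ
  by_contra hcon
  push_neg at hcon
  set x := ψ t with hx
  have hxC : x ∈ H.C := hC' t hta htb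
  set δ'' : ℝ := min δ (b - t) with hδ''def
  have hδ'' : 0 < δ'' := lt_min hδ (by linarith)
  obtain ⟨V, hV, hVb⟩ := hFlb x hxC
  obtain ⟨M0, hM0⟩ := hVb.subset_closedBall 0
  set M1 : ℝ := |M0| + 1 with hM1def
  have hM1 : 0 < M1 := by positivity
  have hMsub : (⋃ z ∈ V ∩ H.C, H.F z) ⊆ Metric.closedBall 0 M1 :=
    hM0.trans (Metric.closedBall_subset_closedBall (by
      calc M0 ≤ |M0| := le_abs_self _
      _ ≤ M1 := by simp [hM1def]))
  have htIcc : t ∈ Icc a b := ⟨hta.le, htb.le⟩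
  have hψt : ContinuousWithinAt ψ (Icc a b) t := hcont t htIcc
  obtain ⟨η, hη, hηV⟩ := cw_nhd hψt hV
  set c0 : ℝ := min (η / 2) δ'' with hc0def
  have hc0 : 0 < c0 := lt_min (by linarith) hδ''
  set h : ℕ → ℝ := fun i => c0 / (i + 2) with hhdef
  have hh0 : ∀ i, 0 < h i := fun i => by positivity
  have hhle : ∀ i, h i ≤ c0 / 2 := by
    intro i
    apply div_le_div_of_nonneg_left hc0.le (by norm_num)
    · norm_num
  have hhδ'' : ∀ i, h i < δ'' := fun i =>
    lt_of_le_of_lt (hhle i) (by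
      have : c0 ≤ δ'' := min_le_right _ _
      linarith)
  have hhδ : ∀ i, h i < δ := fun i => (hhδ'' i).trans_le (min_le_left _ _)
  have hhb : ∀ i, t + h i < b := fun i => by
    have := (hhδ'' i).trans_le (min_le_right _ _); linarith
  have hhη : ∀ i, h i < η := fun i => (hhle i).trans_lt (by
    have : c0 ≤ η / 2 := min_le_left _ _
    linarith)
  have hIccmem : ∀ i, ∀ u ∈ Icc t (t + h i), u ∈ Icc a b :=
    fun i u hu => ⟨hta.le.trans hu.1, hu.2.trans (hhb i).le⟩
  have hVmem : ∀ i, ∀ u ∈ Icc t (t + h i), ψ u ∈ V := by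
    intro i u hu
    apply hηV u (hIccmem i u hu)
    rw [abs_sub_lt_iff]
    constructor
    · have := hu.2; have := hhη i; linarith
    · have := hu.1; linarith
  have hCmem : ∀ i, ∀ u, t < u → u ≤ t + h i → ψ u ∈ H.C :=
    fun i u h1' h2' => hC' u (hta.trans h1') (lt_of_le_of_lt h2' (hhb i))
  -- the difference quotients
  set q : ℕ → ES n := fun i => (h i)⁻¹ • (ψ (t + h i) - x) with hqdef
  have hrep : ∀ i, ψ (t + h i) - x = ∫ w in t..(t + h i), f w := by
    intro i
    exact hsub t (t + h i) hta.le (by have := hh0 i; linarith) (hhb i).le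
  have haebound : ∀ i, ∀ᵐ u ∂(volume.restrict (Set.uIoc t (t + h i))), ‖f u‖ ≤ M1 := by
    intro i
    have hI : Set.uIoc t (t + h i) = Ioc t (t + h i) := by
      rw [uIoc_of_le]; have := hh0 i; linarith
    rw [hI]
    refine (ae_restrict_iff' measurableSet_Ioc).mpr (haeF.mono fun u hu hmem => ?_)
    · have huC : ψ u ∈ H.C := hCmem i u hmem.1 hmem.2
      have huV : ψ u ∈ V := hVmem i u ⟨hmem.1.le, hmem.2⟩
      have : f u ∈ H.F (ψ u) := hu ⟨hta.trans hmem.1, lt_of_le_of_lt hmem.2 (hhb i)⟩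
      have : f u ∈ ⋃ z ∈ V ∩ H.C, H.F z := Set.mem_biUnion ⟨huV, huC⟩ this
      simpa [Metric.mem_closedBall, dist_eq_norm] using hMsub this
  have hintf : ∀ i, IntervalIntegrable f volume t (t + h i) := fun i =>
    hint t (t + h i) hta.le (by have := hh0 i; linarith) (hhb i).le
  have hqM : ∀ i, q i ∈ Metric.closedBall (0 : ES n) M1 := by
    intro i
    rw [Metric.mem_closedBall, dist_eq_norm, sub_zero]
    have hnorm : ‖ψ (t + h i) - x‖ ≤ M1 * (h i) := by
      have h0 : ‖∫ w in t..(t + h i), f w‖ ≤ |∫ _ in t..(t + h i), M1| := by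
        have hle : t ≤ t + h i := by have := hh0 i; linarith
        have hae' : ∀ᵐ u ∂volume.restrict (Ioc t (t + h i)), ‖f u‖ ≤ M1 := by
          have := haebound i; rwa [uIoc_of_le hle] at this
        exact (intervalIntegral.norm_integral_le_of_norm_le (g := fun _ => M1) hle
          ((ae_restrict_iff' measurableSet_Ioc).mp hae') intervalIntegrable_const).trans
          (le_abs_self _)
      rw [intervalIntegral.integral_const, smul_eq_mul] at h0
      rw [hrep i]
      calc ‖∫ w in t..(t + h i), f w‖ ≤ |(t + h i - t) * M1| := h0
        _ = M1 * h i := by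
            rw [abs_of_nonneg (by nlinarith [hh0 i, hM1])]; ring
    show ‖(h i)⁻¹ • (ψ (t + h i) - x)‖ ≤ M1
    rw [norm_smul, norm_inv, Real.norm_eq_abs, abs_of_pos (hh0 i)]
    rw [inv_mul_le_iff₀ (hh0 i)]
    calc ‖ψ (t + h i) - x‖ ≤ M1 * h i := hnorm
      _ = h i * M1 := mul_comm _ _
  obtain ⟨v, -, σ, hσ, hqtend⟩ :=
    tendsto_subseq_of_bounded Metric.isBounded_closedBall hqM
  have htendh : Tendsto h atTop (𝓝 0) := by
    apply Tendsto.div_atTop (tendsto_const_nhds)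
    exact tendsto_atTop_add_const_right _ 2 tendsto_natCast_atTop_atTop
  have hσh : Tendsto (fun i => h (σ i)) atTop (𝓝 0) := htendh.comp hσ.tendsto_atTop
  have hψtend : Tendsto (fun i => ψ (t + h (σ i))) atTop (𝓝 x) := by
    apply hψt.tendsto.comp
    rw [tendsto_nhdsWithin_iff]
    constructor
    · have : Tendsto (fun i => t + h (σ i)) atTop (𝓝 (t + 0)) :=
        tendsto_const_nhds.add hσh
      simpa using this
    · exact Eventually.of_forall fun i => hIccmem (σ i) _
        ⟨by have := hh0 (σ i); linarith, le_rfl⟩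
  -- v ∈ F x
  have hvF : v ∈ H.F x := by
    have hcl : ∀ ε' > (0:ℝ), v ∈ Metric.cthickening ε' (H.F x) := by
      intro ε' hε'
      obtain ⟨ρ, hρ, hρsub⟩ := osc_usc hFosc hFlb hxC ε' hε'
      obtain ⟨η2, hη2, hη2b⟩ := cw_nhd hψt (Metric.ball_mem_nhds x hρ)
      obtain ⟨i₁, hi₁⟩ := (htendh.eventually_lt_const hη2).exists_forall_of_atTop
      have hmemth : ∀ i, h i < η2 → q i ∈ Metric.cthickening ε' (H.F x) := by
        intro i hiη2
        have hIoc0 : volume (Ioc t (t + h i)) = ENNReal.ofReal (h i) := by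
          rw [Real.volume_Ioc]; ring_nf
        have hq_avg : q i = ⨍ u in Ioc t (t + h i), f u ∂volume := by
          show (h i)⁻¹ • (ψ (t + h i) - x) = _
          rw [MeasureTheory.setAverage_eq, hrep i,
            intervalIntegral.integral_of_le (by have := hh0 i; linarith),
            measureReal_def, hIoc0, ENNReal.toReal_ofReal (hh0 i).le]
        rw [hq_avg]
        apply Convex.set_average_mem ((hFconv x hxC).cthickening ε')
          Metric.isClosed_cthickening
        · rw [hIoc0]; simp [ENNReal.ofReal_eq_zero, not_le, hh0 i]
        · rw [hIoc0]; exact ENNReal.ofReal_ne_top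
        · have hfs : ∀ᵐ u ∂(volume.restrict (Ioc t (t + h i))),
              f u ∈ Metric.cthickening ε' (H.F x) := by
            refine (ae_restrict_iff' measurableSet_Ioc).mpr
              (haeF.mono fun u hu hmem => ?_)
            have huC : ψ u ∈ H.C := hCmem i u hmem.1 hmem.2
            have hd : dist (ψ u) x < ρ := by
              have := hη2b u (hIccmem i u ⟨hmem.1.le, hmem.2⟩) (by
                rw [abs_sub_lt_iff]
                constructor
                · have := hmem.2; linarith
                · have := hmem.1; linarith)
              simpa [Metric.mem_ball] using this
            exact hρsub (ψ u) huC hd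
              (hu ⟨hta.trans hmem.1, lt_of_le_of_lt hmem.2 (hhb i)⟩)
          exact hfs
        · exact (hintf i).1
      have hev : ∀ᶠ i in atTop, q (σ i) ∈ Metric.cthickening ε' (H.F x) := by
        filter_upwards [hσ.tendsto_atTop.eventually_ge_atTop i₁] with i hi
        exact hmemth (σ i) (hi₁ (σ i) hi)
      exact Metric.isClosed_cthickening.mem_of_tendsto hqtend hev
    have : v ∈ closure (H.F x) := by
      rw [Metric.closure_eq_iInter_cthickening]
      exact Set.mem_iInter₂.mpr fun ε' hε' => hcl ε' hε'
    rwa [(osc_closed_value hFosc hxC).closure_eq] at this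
  -- v ∈ tangent cone
  have hvT : v ∈ BouligandTangentCone H.C x := by
    refine ⟨fun i => ψ (t + h (σ i)), fun i => h (σ i), ?_, fun i => hh0 _, hψtend, hσh, ?_⟩
    · exact fun i => hCmem (σ i) _ (by have := hh0 (σ i); linarith) le_rfl
    · exact hqtend
  have hder : fderiv ℝ B x v ≤ 0 := h1 x ⟨hxC, htU, htK⟩ v ⟨hvF, hvT⟩
  -- contradiction via the limit of difference quotients
  set dB := fderiv ℝ B x with hdBdef
  have hdB : HasFDerivAt B dB x :=
    (hB.differentiable one_ne_zero x).hasFDerivAt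
  set L : ℕ → ℝ := fun i => (B (ψ (t + h (σ i))) - B x) / h (σ i) with hLdef
  set E : ℕ → ℝ := fun i =>
    (B (ψ (t + h (σ i))) - B x - dB (ψ (t + h (σ i)) - x)) / h (σ i) with hEdef
  have hyq : ∀ i, ψ (t + h (σ i)) - x = h (σ i) • q (σ i) := by
    intro i
    rw [hqdef, smul_smul, mul_inv_cancel₀ (hh0 (σ i)).ne', one_smul]
  have hEtend : Tendsto E atTop (𝓝 0) := by
    rw [NormedAddCommGroup.tendsto_nhds_zero]
    intro ε0 hε0
    have hc : (0:ℝ) < ε0 / (2 * (M1 + 1)) := by positivity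
    have hlittle := hdB.isLittleO.def hc
    filter_upwards [hψtend.eventually hlittle] with i hi
    have hnn : ‖ψ (t + h (σ i)) - x‖ ≤ M1 * h (σ i) := by
      rw [hyq i, norm_smul, Real.norm_eq_abs, abs_of_pos (hh0 (σ i))]
      have := hqM (σ i)
      rw [Metric.mem_closedBall, dist_eq_norm, sub_zero] at this
      calc h (σ i) * ‖q (σ i)‖ ≤ h (σ i) * M1 := by
            apply mul_le_mul_of_nonneg_left this (hh0 (σ i)).le
        _ = M1 * h (σ i) := mul_comm _ _
    have hEbnd : ‖E i‖ ≤ ε0 / (2 * (M1 + 1)) * M1 := by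
      rw [hEdef]
      simp only [Real.norm_eq_abs, abs_div, abs_of_pos (hh0 (σ i))]
      rw [div_le_iff₀ (hh0 (σ i))]
      calc |B (ψ (t + h (σ i))) - B x - dB (ψ (t + h (σ i)) - x)|
          ≤ ε0 / (2 * (M1 + 1)) * ‖ψ (t + h (σ i)) - x‖ := by
            simpa [Real.norm_eq_abs] using hi
        _ ≤ ε0 / (2 * (M1 + 1)) * (M1 * h (σ i)) := by
            apply mul_le_mul_of_nonneg_left hnn hc.le
        _ = ε0 / (2 * (M1 + 1)) * M1 * h (σ i) := by ring
    calc ‖E i‖ ≤ ε0 / (2 * (M1 + 1)) * M1 := hEbnd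
      _ < ε0 := by
          rw [div_mul_eq_mul_div, div_lt_iff₀ (by positivity)]
          nlinarith
  have hLtend : Tendsto L atTop (𝓝 (dB v)) := by
    have hdBq : Tendsto (fun i => dB (q (σ i))) atTop (𝓝 (dB v)) :=
      (dB.continuous.tendsto v).comp hqtend
    have : Tendsto (fun i => E i + dB (q (σ i))) atTop (𝓝 (0 + dB v)) :=
      hEtend.add hdBq
    rw [zero_add] at this
    apply this.congr
    intro i
    rw [hEdef, hLdef]
    simp only
    rw [hyq i, dB.map_smul, smul_eq_mul]
    have hne := (hh0 (σ i)).ne'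
    field_simp
    ring
  have hLlt : ∀ᶠ i in atTop, L i < ε :=
    hLtend.eventually_lt_const (by linarith)
  obtain ⟨i, hi⟩ := hLlt.exists
  have hgt := hcon (h (σ i)) (hh0 (σ i)) (hhδ (σ i))
  rw [hLdef] at hi
  simp only at hi
  rw [div_lt_iff₀ (hh0 (σ i))] at hi
  nlinarith [hh0 (σ i)]
lemma flow_inv {n : ℕ} {H : HybridSystem n} {K : Set (ES n)}
    (hKcl : IsClosed K)
    (hFosc : OuterSemicontinuousOn H.F H.C)
    (hFconv : ∀ x ∈ H.C, Convex ℝ (H.F x))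
    (hFlb : LocallyBoundedOn H.F H.C)
    {B : ES n → ℝ} (hB : ContDiff ℝ 1 B) (hBc : BarrierCandidate H B K)
    {U : Set (ES n)} (hUopen : IsOpen U) (hU : frontier K ⊆ U)
    (h1 : ∀ x ∈ H.C ∩ (U \ K), ∀ η ∈ H.F x ∩ BouligandTangentCone H.C x,
      fderiv ℝ B x η ≤ 0)
    {s : HybridArc n} (hs : IsSolution H s) {j : ℕ} {a b : ℝ} (hab : a ≤ b)
    (hdom : ∀ u ∈ Icc a b, (u, j) ∈ s.dom)
    (ha : s.toFun a j ∈ K) : ∀ u ∈ Icc a b, s.toFun u j ∈ K := by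
  obtain ⟨f, hCmem, hae, hint⟩ := hs.flow j
  set ψ : ℝ → ES n := fun u => s.toFun u j with hψdef
  have hint' : ∀ u v : ℝ, a ≤ u → u ≤ v → v ≤ b → IntervalIntegrable f volume u v :=
    fun u v h1' h2' h3' =>
      (hint u v (hdom u ⟨h1', h2'.trans h3'⟩) (hdom v ⟨h1'.trans h2', h3'⟩)).1
  have hsub' : ∀ u v : ℝ, a ≤ u → u ≤ v → v ≤ b → ψ v - ψ u = ∫ w in u..v, f w := by
    intro u v h1' h2' h3'
    have := (hint u v (hdom u ⟨h1', h2'.trans h3'⟩) (hdom v ⟨h1'.trans h2', h3'⟩)).2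
    rw [hψdef]; simp only; rw [this]; abel
  have hcont : ContinuousOn ψ (Icc a b) := by
    have hii : IntervalIntegrable f volume a b := hint' a b le_rfl hab le_rfl
    have hprim : ContinuousOn (fun u => ∫ w in a..u, f w) (Icc a b) := by
      have := intervalIntegral.continuousOn_primitive_interval' hii
        (left_mem_uIcc (a := a) (b := b))
      rwa [uIcc_of_le hab] at this
    have hadd : ContinuousOn (fun u => ψ a + ∫ w in a..u, f w) (Icc a b) :=
      continuousOn_const.add hprim
    refine hadd.congr fun u hu => ?_
    have := hsub' a u le_rfl hu.1 hu.2
    have h2 : ψ u = ψ a + ∫ w in a..u, f w := by rw [← this]; abel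
    exact h2
  have hC' : ∀ u, a < u → u < b → ψ u ∈ H.C := by
    intro u h1' h2'
    exact hCmem u (interior_maximal (fun w hw => hdom w ⟨hw.1.le, hw.2.le⟩)
      isOpen_Ioo ⟨h1', h2'⟩)
  have haeF : ∀ᵐ u ∂volume, u ∈ Ioo a b → f u ∈ H.F (ψ u) :=
    hae.mono fun u hu hmem => hu (hdom u ⟨hmem.1.le, hmem.2.le⟩)
  by_contra hcon
  push_neg at hcon
  obtain ⟨u0, hu0, hu0K⟩ := hcon
  set A : Set ℝ := {t ∈ Icc a b | ∀ u ∈ Icc a t, ψ u ∈ K} with hAdef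
  have haA : a ∈ A := ⟨⟨le_rfl, hab⟩, fun u hu => by
    have : u = a := le_antisymm hu.2 hu.1
    rwa [this]⟩
  have hAne : A.Nonempty := ⟨a, haA⟩
  have hAbdd : BddAbove A := ⟨b, fun t ht => ht.1.2⟩
  set tS := sSup A with htSdef
  have htmem : tS ∈ Icc a b := ⟨le_csSup hAbdd haA, csSup_le hAne fun t ht => ht.1.2⟩
  have hKbelow : ∀ u, a ≤ u → u < tS → ψ u ∈ K := by
    intro u h1' h2'
    obtain ⟨t', ht'A, hlt⟩ := exists_lt_of_lt_csSup hAne h2'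
    exact ht'A.2 u ⟨h1', hlt.le⟩
  have hψtSK : ψ tS ∈ K := by
    rcases eq_or_lt_of_le htmem.1 with heq | hlt
    · exact heq ▸ ha
    · have hclmem : tS ∈ closure (Ico a tS) := by
        rw [closure_Ico hlt.ne]
        exact ⟨htmem.1, le_rfl⟩
      have hcw : ContinuousWithinAt ψ (Ico a tS) tS :=
        (hcont tS htmem).mono fun w hw => ⟨hw.1, hw.2.le.trans htmem.2⟩
      have himg := hcw.mem_closure_image hclmem
      have hsubK : ψ '' (Ico a tS) ⊆ K := by
        rintro y ⟨w, hw, rfl⟩; exact hKbelow w hw.1 hw.2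
      have : ψ tS ∈ closure K := closure_mono hsubK himg
      rwa [hKcl.closure_eq] at this
  have htSA : tS ∈ A := ⟨htmem, fun u hu => by
    rcases lt_or_eq_of_le hu.2 with h | h
    · exact hKbelow u hu.1 h
    · rw [h]; exact hψtSK⟩
  have htSb : tS < b :=
    lt_of_le_of_ne htmem.2 fun h => hu0K (htSA.2 u0 (by rw [h]; exact hu0))
  have hbad : ∀ ε > (0:ℝ), tS + ε ≤ b → ∃ u, tS < u ∧ u ≤ tS + ε ∧ ψ u ∉ K := by
    intro ε hε hle
    by_contra hno
    push_neg at hno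
    have hmem : tS + ε ∈ A := by
      refine ⟨⟨by linarith [htmem.1], hle⟩, fun u hu => ?_⟩
      rcases le_or_gt u tS with h | h
      · exact htSA.2 u ⟨hu.1, h⟩
      · exact hno u h hu.2
    have := le_csSup hAbdd hmem
    linarith
  -- frontier membership
  have hfr : ψ tS ∈ frontier K := by
    rw [frontier_eq_closure_inter_closure]
    refine ⟨subset_closure hψtSK, ?_⟩
    have hseq : ∀ i : ℕ, ∃ u, tS < u ∧ u ≤ tS + (b - tS) / (i + 1) ∧ ψ u ∉ K := by
      intro i
      apply hbad ((b - tS) / (i + 1)) (div_pos (by linarith) (by positivity))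
      have h1' : (b - tS) / ((i:ℝ) + 1) ≤ (b - tS) / 1 := by
        apply div_le_div_of_nonneg_left (by linarith) one_pos
        · exact le_add_of_nonneg_left (Nat.cast_nonneg i)
      simp at h1'
      linarith
    choose u hu1 hu2 hu3 using hseq
    have hutend : Tendsto u atTop (𝓝 tS) := by
      have hup : Tendsto (fun i : ℕ => tS + (b - tS) / (i + 1)) atTop (𝓝 (tS + 0)) := by
        apply tendsto_const_nhds.add
        apply Tendsto.div_atTop tendsto_const_nhds
        exact tendsto_atTop_add_const_right _ 1 tendsto_natCast_atTop_atTop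
      rw [add_zero] at hup
      exact tendsto_of_tendsto_of_tendsto_of_le_of_le
        (tendsto_const_nhds.congr fun i => rfl : Tendsto (fun _ : ℕ => tS) atTop (𝓝 tS))
        hup (fun i => (hu1 i).le) (fun i => hu2 i)
    have hψu : Tendsto (fun i => ψ (u i)) atTop (𝓝 (ψ tS)) := by
      apply (hcont tS htmem).tendsto.comp
      rw [tendsto_nhdsWithin_iff]
      refine ⟨hutend, Eventually.of_forall fun i => ?_⟩
      constructor
      · exact htmem.1.trans (hu1 i).le
      · calc u i ≤ tS + (b - tS) / (i + 1) := hu2 i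
          _ ≤ tS + (b - tS) / 1 := by
              apply add_le_add_right
              apply div_le_div_of_nonneg_left (by linarith) one_pos
              · exact le_add_of_nonneg_left (Nat.cast_nonneg i)
          _ = b := by ring
    exact mem_closure_of_tendsto hψu (Eventually.of_forall fun i => hu3 i)
  have hUt : ψ tS ∈ U := hU hfr
  obtain ⟨η3, hη3, hη3U⟩ := cw_nhd (hcont tS htmem) (hUopen.mem_nhds hUt)
  set δ : ℝ := min (η3 / 2) ((b - tS) / 2) with hδdef
  have hδpos : 0 < δ := lt_min (by linarith) (by linarith)
  have hδb : tS + δ < b := by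
    have : δ ≤ (b - tS) / 2 := min_le_right _ _
    linarith
  have hδη3 : δ < η3 := by
    have : δ ≤ η3 / 2 := min_le_left _ _
    linarith
  have hIccsub : Icc tS (tS + δ) ⊆ Icc a b :=
    fun w hw => ⟨htmem.1.trans hw.1, hw.2.trans (by linarith)⟩
  have hg : ContinuousOn (fun t => B (ψ t)) (Icc tS (tS + δ)) :=
    hB.continuous.comp_continuousOn (hcont.mono hIccsub)
  have hgc : B (ψ tS) ≤ 0 := hBc.1 _ hψtSK
  have hle0 : ∀ t ∈ Icc tS (tS + δ), B (ψ t) ≤ 0 := by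
    apply dini_le_zero (by linarith) hg _ hgc
    intro t ht1 ht2 hgt ε hε δ2 hδ2
    have htne : tS < t := by
      rcases eq_or_lt_of_le ht1 with heq | hlt
      · exfalso; rw [← heq] at hgt; linarith
      · exact hlt
    have htU2 : ψ t ∈ U := by
      apply hη3U t ⟨htmem.1.trans ht1, by linarith⟩
      rw [abs_sub_lt_iff]
      constructor
      · linarith
      · linarith
    have htK2 : ψ t ∉ K := fun hK' => absurd (hBc.1 _ hK') (not_le.mpr hgt)
    have hta' : a < t := lt_of_le_of_lt htmem.1 htne
    have htb' : t < b := by linarith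
    exact dini_step hFosc hFconv hFlb hB h1 hcont hC' haeF hsub' hint'
      hta' htb' htU2 htK2 ε hε δ2 hδ2
  obtain ⟨u, hu1, hu2, hu3⟩ := hbad δ hδpos (by linarith)
  have huC : ψ u ∈ H.C := hC' u (lt_of_le_of_lt htmem.1 hu1) (by linarith)
  have huB : B (ψ u) ≤ 0 := hle0 u ⟨hu1.le, hu2⟩
  have : 0 < B (ψ u) :=
    hBc.2 (ψ u) ⟨Set.mem_union_left _ (Set.mem_union_left _ huC), hu3⟩
  linarith

lemma dom_seg {n : ℕ} (s : HybridArc n) {t : ℝ} {j : ℕ} (h : (t, j) ∈ s.dom) :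
    ∃ e : ℝ, e ≤ t ∧ (∀ u, e ≤ u → u ≤ t → (u, j) ∈ s.dom) ∧
      (j = 0 → e = 0) ∧ (∀ j' : ℕ, j = j' + 1 → (e, j') ∈ s.dom) := by
  obtain ⟨hpos, hτ⟩ := s.htd
  obtain ⟨τ, hτ0, hτend, hτmono, hbc⟩ := hτ (t, j) h
  simp only at hτ0 hτend hτmono hbc
  refine ⟨τ j, ?_, ?_, ?_, ?_⟩
  · rw [← hτend]; exact hτmono j le_rfl
  · intro u h1 h2
    exact ((hbc u j).mpr ⟨le_rfl, h1, by rwa [hτend]⟩).1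
  · intro hj; rw [hj]; exact hτ0
  · intro j' hj'
    have h1 : τ j' ≤ τ j := by
      rw [hj']; exact hτmono j' (by omega)
    have h2 : τ j ≤ t := by rw [← hτend]; exact hτmono j le_rfl
    exact ((hbc (τ j) j').mpr ⟨by omega, h1, by rw [hj']⟩).1
/-- barrier-function sufficient conditions for `□p`. -/
theorem always_sufficient_barrier
    (n : ℕ) (H : HybridSystem n) (p : ES n → Prop) (K : Set (ES n))
    (hK : K = {x ∈ H.X | p x}) (hKcl : IsClosed K) (hKsub : K ⊆ H.C ∪ H.D)
    (hFosc : OuterSemicontinuousOn H.F H.C)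
    (hFne : ∀ x ∈ H.C, (H.F x).Nonempty)
    (hFconv : ∀ x ∈ H.C, Convex ℝ (H.F x))
    (hFlb : LocallyBoundedOn H.F H.C)
    (hGne : ∀ x ∈ H.D, (H.G x).Nonempty)
    (B : ES n → ℝ) (hB : ContDiff ℝ 1 B) (hBc : BarrierCandidate H B K)
    (U : Set (ES n)) (hUopen : IsOpen U) (hU : frontier K ⊆ U)
    (h1 : ∀ x ∈ H.C ∩ (U \ K), ∀ η ∈ H.F x ∩ BouligandTangentCone H.C x,
      fderiv ℝ B x η ≤ 0)
    (h2 : ∀ x ∈ H.D ∩ K, ∀ η ∈ H.G x, B η ≤ 0)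
    (h3 : (⋃ x ∈ H.D ∩ K, H.G x) ⊆ H.C ∪ H.D) :
    ∀ s : HybridArc n, IsMaximal H s → s.toFun 0 0 ∈ K →
      (∀ t : ℝ, ∀ j : ℕ, (t, j) ∈ s.dom → SatAlwaysAt s K t j) ∧
      ∀ q ∈ s.dom, s.toFun q.1 q.2 ∈ K := by
  intro s hmax hinit
  have hsol := hmax.1
  have main : ∀ j : ℕ, ∀ t : ℝ, (t, j) ∈ s.dom → s.toFun t j ∈ K := by
    intro j
    induction j with
    | zero =>
      intro t ht
      obtain ⟨e, het, hseg, hzero, -⟩ := dom_seg s ht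
      have he0 : e = 0 := hzero rfl
      rw [he0] at hseg
      have h0t : (0:ℝ) ≤ t := s.htd.1 (t, 0) ht
      exact flow_inv hKcl hFosc hFconv hFlb hB hBc hUopen hU h1 hsol h0t
        (fun u hu => hseg u hu.1 hu.2) hinit t ⟨h0t, le_rfl⟩
    | succ j ih =>
      intro t ht
      obtain ⟨e, het, hseg, -, hprev⟩ := dom_seg s ht
      have hej : (e, j) ∈ s.dom := hprev j rfl
      have heK : s.toFun e j ∈ K := ih e hej
      have hedom : (e, j + 1) ∈ s.dom := hseg e le_rfl het
      obtain ⟨hD, hG⟩ := hsol.jump e j hej hedom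
      have hηK : s.toFun e (j + 1) ∈ K := by
        by_contra hnot
        have hBle : B (s.toFun e (j + 1)) ≤ 0 := h2 _ ⟨hD, heK⟩ _ hG
        have hmemU : s.toFun e (j + 1) ∈ H.C ∪ H.D :=
          h3 (Set.mem_biUnion (Set.mem_inter hD heK) hG)
        have hmem2 : s.toFun e (j + 1) ∈ H.C ∪ H.D ∪ ⋃ y ∈ H.D, H.G y :=
          Set.mem_union_left _ hmemU
        have := hBc.2 _ ⟨hmem2, hnot⟩
        linarith
      exact flow_inv hKcl hFosc hFconv hFlb hB hBc hUopen hU h1 hsol het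
        (fun u hu => hseg u hu.1 hu.2) hηK t ⟨het, le_rfl⟩
  exact ⟨fun t j hd t' j' hd' _ => main j' t' hd', fun q hq => main q.2 q.1 hq⟩
end
end

section
/- Let H = (C,F,D,G) be a hybrid system on X ⊆ ℝ^n and p an atomic proposition whose truth set K = {x ∈ X : p(x) = 1} is nonempty and closed. Suppose there is an open set N ⊇ K with G(N) ⊆ N ⊆ X, a continuous function V : N → [0,∞) that is locally Lipschitz on an open neighborhood of C ∩ N, and a constant c > 0 such that: (2.1) for every x ∈ N ∩ (closure(C) ∪ D) with p(x) = 0, every maximal solution φ with φ(0,0) = x satisfies ceil(V(x)/c) ≤ sup_{(t,j)∈dom φ} j; and (2.2) V is positive definite with respect to K, u_C(x) ≤ 0 for every x ∈ (C ∩ N) \ K, and u_D(x) ≤ −min{c, V(x)} for every x ∈ (D ∩ N) \ K. Then for every r ∈ [0,∞] such that L_V(r) is a compact subset of N, every maximal solution φ to H with φ(0,0) ∈ L_V(r) ∩ (closure(C) ∪ D) satisfies the formula ◇p at (t,j) = (0,0), i.e., there exists (t',j') ∈ dom φ with φ(t',j') ∈ K. -/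
open Set Filter Topology MeasureTheory
open scoped ENNReal NNReal

noncomputable section

variable {n : ℕ}

/-! ### Auxiliary lemmas -/

lemma LipschitzOnWith.weaken' {α β : Type*} [PseudoEMetricSpace α] [PseudoEMetricSpace β]
    {f : α → β} {s : Set α} {K K' : ℝ≥0} (h : LipschitzOnWith K f s) (hK : K ≤ K') :
    LipschitzOnWith K' f s := fun x hx y hy =>
  (h hx hy).trans (mul_le_mul_left (by exact_mod_cast hK) _)

/-- Membership of the whole segment `[a,b]` in a hybrid time domain. -/
lemma mem_dom_Icc (s : HybridArc n) {a b : ℝ} {j : ℕ} (ha : (a, j) ∈ s.dom)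
    (hb : (b, j) ∈ s.dom) (hab : a ≤ b) : ∀ t ∈ Set.Icc a b, (t, j) ∈ s.dom := by
  obtain ⟨τ, _h0, hend, _hmono, hiff⟩ := s.htd.2 (b, j) hb
  have h1 := (hiff a j).mp ⟨ha, hab, le_rfl⟩
  intro t ht
  exact ((hiff t j).mpr ⟨le_rfl, h1.2.1.trans ht.1, hend ▸ ht.2⟩).1

/-- Continuity of a solution arc on a segment of its domain. -/
lemma arc_continuousOn {H : HybridSystem n} {s : HybridArc n} (hs : IsSolution H s)
    {j : ℕ} {a b : ℝ} (ha : (a, j) ∈ s.dom) (hb : (b, j) ∈ s.dom) (hab : a ≤ b) :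
    ContinuousOn (fun t => s.toFun t j) (Set.Icc a b) := by
  obtain ⟨f, _hC, _hFae, hint⟩ := hs.flow j
  have hdom := mem_dom_Icc s ha hb hab
  have h1 : IntegrableOn f (Set.uIcc a b) volume := by
    rw [Set.uIcc_of_le hab, integrableOn_Icc_iff_integrableOn_Ioc]
    exact ((hint a b ha hb).1).1
  have h2 : ContinuousOn (fun t => s.toFun a j + ∫ u in a..t, f u) (Set.Icc a b) := by
    have := (continuousOn_const (c := s.toFun a j)).add
      (intervalIntegral.continuousOn_primitive_interval h1)
    rwa [Set.uIcc_of_le hab] at this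
  exact h2.congr fun t ht => (hint a t ha (hdom t ht)).2


set_option maxHeartbeats 2000000 in
/-- Along a flow interval staying in `N \ K`, the Lyapunov function does not increase. -/
lemma flow_mono {H : HybridSystem n} {K N : Set (ES n)} (hNopen : IsOpen N)
    {V : ES n → ℝ} (hVcont : ContinuousOn V N)
    (hVlip : LocallyLipschitzOnNhdOf V (H.C ∩ N))
    (h22a : ∀ x ∈ (H.C ∩ N) \ K, uC_le H V x 0)
    {s : HybridArc n} (hs : IsSolution H s)
    {j : ℕ} {a b : ℝ} (hab : a ≤ b)
    (ha : (a, j) ∈ s.dom) (hb : (b, j) ∈ s.dom)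
    (hN : ∀ t ∈ Set.Icc a b, s.toFun t j ∈ N)
    (hnK : ∀ t ∈ Set.Icc a b, s.toFun t j ∉ K) :
    V (s.toFun b j) ≤ V (s.toFun a j) := by
  rcases eq_or_lt_of_le hab with rfl | hlt
  · exact le_rfl
  obtain ⟨f, hCmem, hFae, hint⟩ := hs.flow j
  have hdom := mem_dom_Icc s ha hb hab
  have hfab : IntervalIntegrable f volume a b := (hint a b ha hb).1
  have hrep : ∀ t ∈ Set.Icc a b, s.toFun t j = s.toFun a j + ∫ u in a..t, f u :=
    fun t ht => (hint a t ha (hdom t ht)).2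
  have hφcont : ContinuousOn (fun t => s.toFun t j) (Set.Icc a b) :=
    arc_continuousOn hs ha hb hab
  have hC' : ∀ t ∈ Set.Ioo a b, s.toFun t j ∈ H.C := by
    intro t ht
    exact hCmem t
      (interior_maximal (fun u hu => hdom u (Set.Ioo_subset_Icc_self hu)) isOpen_Ioo ht)
  have hdiff : ∀ t u, a ≤ t → t ≤ u → u ≤ b →
      s.toFun u j - s.toFun t j = ∫ w in t..u, f w := by
    intro t u h1 h2 h3
    rw [hrep t ⟨h1, h2.trans h3⟩, hrep u ⟨h1.trans h2, h3⟩]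
    have e1 : IntervalIntegrable f volume a t := hfab.mono_set (by
      rw [Set.uIcc_of_le h1, Set.uIcc_of_le hab]
      exact Set.Icc_subset_Icc le_rfl (h2.trans h3))
    have e2 : IntervalIntegrable f volume t u := hfab.mono_set (by
      rw [Set.uIcc_of_le h2, Set.uIcc_of_le hab]
      exact Set.Icc_subset_Icc h1 h3)
    rw [← intervalIntegral.integral_add_adjacent_intervals e1 e2]
    abel
  set fh : ℝ → ES n := (Set.Ioo a b).indicator f with hfhdef
  have hfhint : Integrable fh volume :=
    IntegrableOn.integrable_indicator ((hfab.1).mono_set Set.Ioo_subset_Ioc_self)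
      measurableSet_Ioo
  have hleb : ∀ᵐ t ∂(volume : Measure ℝ),
      Tendsto (fun ρ => ⨍ y in Metric.closedBall t ρ, ‖fh y - fh t‖) (𝓝[>] 0) (𝓝 0) := by
    filter_upwards [(Besicovitch.vitaliFamily (volume : Measure ℝ)).ae_tendsto_average_norm_sub
      hfhint.locallyIntegrable] with t ht
    exact ht.comp (Besicovitch.tendsto_filterAt _ t)
  have hae : ∀ᵐ t ∂(volume : Measure ℝ), t ∈ Set.Ioo a b →
      f t ∈ H.F (s.toFun t j) ∧
      Tendsto (fun ρ => ⨍ y in Metric.closedBall t ρ, ‖fh y - fh t‖) (𝓝[>] 0) (𝓝 0) := by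
    filter_upwards [hFae, hleb] with t h1 h2 ht
    exact ⟨h1 (hdom t (Set.Ioo_subset_Icc_self ht)), h2⟩
  set Z : Set ℝ := {t | ¬ (t ∈ Set.Ioo a b →
      f t ∈ H.F (s.toFun t j) ∧
      Tendsto (fun ρ => ⨍ y in Metric.closedBall t ρ, ‖fh y - fh t‖) (𝓝[>] 0) (𝓝 0))}
    with hZdef
  have hZ0 : volume Z = 0 := ae_iff.mp hae
  have hZgood : ∀ t, t ∉ Z → t ∈ Set.Ioo a b →
      f t ∈ H.F (s.toFun t j) ∧
      Tendsto (fun ρ => ⨍ y in Metric.closedBall t ρ, ‖fh y - fh t‖) (𝓝[>] 0) (𝓝 0) :=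
    fun t ht h2 => (of_not_not ht) h2
  have hba : (0:ℝ) < b - a := by linarith
  -- main estimate on compact subintervals
  have main : ∀ a₀ b₀ : ℝ, a < a₀ → a₀ ≤ b₀ → b₀ < b → ∀ ε : ℝ, 0 < ε →
      V (s.toFun b₀ j) ≤ V (s.toFun a₀ j) + ε := by
    intro a₀ b₀ haa hab₀ hbb ε hε
    have hsubI : Set.Icc a₀ b₀ ⊆ Set.Icc a b := Set.Icc_subset_Icc haa.le hbb.le
    have hsubO : Set.Icc a₀ b₀ ⊆ Set.Ioo a b := fun t ht =>
      ⟨haa.trans_le ht.1, lt_of_le_of_lt ht.2 hbb⟩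
    -- uniform Lipschitz constant along the compact path
    obtain ⟨U₀, hU₀o, hU₀sub, hU₀lip⟩ := hVlip
    set Γ : Set (ES n) := (fun t => s.toFun t j) '' Set.Icc a₀ b₀ with hΓdef
    have hΓcomp : IsCompact Γ := isCompact_Icc.image_of_continuousOn (hφcont.mono hsubI)
    have hΓsub : Γ ⊆ U₀ := by
      rintro x ⟨t, ht, rfl⟩
      exact hU₀sub ⟨hC' t (hsubO ht), hN t (hsubI ht)⟩
    have hcov : ∀ x : ES n, ∃ q : ℝ≥0 × Set (ES n), IsOpen q.2 ∧ LipschitzOnWith q.1 V q.2 ∧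
        (x ∈ Γ → x ∈ q.2) := by
      intro x
      by_cases hx : x ∈ Γ
      · obtain ⟨L, W, hW, hlip⟩ := hU₀lip x (hΓsub hx)
        exact ⟨(L, interior W), isOpen_interior, hlip.mono interior_subset,
          fun _ => mem_interior_iff_mem_nhds.2 hW⟩
      · exact ⟨(0, ∅), isOpen_empty, lipschitzOnWith_empty _ _, fun h => absurd h hx⟩
    choose q hqo hqlip hqmem using hcov
    obtain ⟨T, hTsub, hTfin, hTcov⟩ := hΓcomp.elim_finite_subcover_image
      (fun x (_ : x ∈ Γ) => hqo x) (fun y hy => Set.mem_biUnion hy (hqmem y hy))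
    set L : ℝ≥0 := hTfin.toFinset.sup (fun x => (q x).1) with hLdef
    have hLoc : ∀ t ∈ Set.Icc a₀ b₀, ∃ W, IsOpen W ∧ s.toFun t j ∈ W ∧
        LipschitzOnWith L V W := by
      intro t ht
      have hmem : s.toFun t j ∈ ⋃ x ∈ T, (q x).2 := hTcov ⟨t, ht, rfl⟩
      rw [Set.mem_iUnion₂] at hmem
      obtain ⟨x, hxT, hxW⟩ := hmem
      exact ⟨(q x).2, hqo x, hxW, (hqlip x).weaken'
        (Finset.le_sup (f := fun x => (q x).1) (hTfin.mem_toFinset.2 hxT))⟩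
    -- constants
    have hD1 : (0:ℝ) < 4 * (b - a) + 4 := by linarith
    set ε₁ : ℝ := ε / (4 * (b - a) + 4) with hε₁def
    have hε₁ : 0 < ε₁ := div_pos hε hD1
    set ε₂ : ℝ := ε / (2 * ((L : ℝ) + 1)) with hε₂def
    have hL0 : (0:ℝ) ≤ (L : ℝ) := L.coe_nonneg
    have hε₂ : 0 < ε₂ := div_pos hε (by positivity)
    -- small open neighborhood of the bad set
    have hfin : ∫⁻ t, ‖fh t‖₊ ∂(volume : Measure ℝ) ≠ ∞ := hfhint.2.ne
    obtain ⟨δ, hδ0, hδ⟩ := exists_pos_setLIntegral_lt_of_measure_lt hfin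
      (ε := ENNReal.ofReal ε₂) (ENNReal.ofReal_pos.mpr hε₂).ne'
    obtain ⟨U, hZU, hUo, hUμ⟩ := Z.exists_isOpen_lt_of_lt δ (by rw [hZ0]; exact hδ0)
    have hUsmall : ∫⁻ t in U, ‖fh t‖₊ ∂volume < ENNReal.ofReal ε₂ := hδ U hUμ
    -- the auxiliary primitive
    set gU : ℝ → ℝ := U.indicator (fun w => ‖f w‖) with hgUdef
    have hfIcc : IntegrableOn f (Set.Icc a₀ b₀) volume :=
      (hfab.1).mono_set (fun w hw => ⟨haa.trans_le hw.1, hw.2.trans hbb.le⟩)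
    have hgUint : IntegrableOn gU (Set.Icc a₀ b₀) volume :=
      (hfIcc.norm).indicator hUo.measurableSet
    have hgUiv : ∀ t u, a₀ ≤ t → u ≤ b₀ → t ≤ u → IntervalIntegrable gU volume t u := by
      intro t u h1 h2 h3
      apply MeasureTheory.IntegrableOn.intervalIntegrable
      refine hgUint.mono_set ?_
      rw [Set.uIcc_of_le h3]
      exact Set.Icc_subset_Icc h1 h2
    set Φ : ℝ → ℝ := fun t => ∫ w in a₀..t, gU w with hΦdef
    have hΦadd : ∀ t u, a₀ ≤ t → t ≤ u → u ≤ b₀ → Φ u - Φ t = ∫ w in t..u, gU w := by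
      intro t u h1 h2 h3
      have h4 := intervalIntegral.integral_add_adjacent_intervals
        (hgUiv a₀ t le_rfl (h2.trans h3) h1) (hgUiv t u h1 h3 h2)
      have e1 : Φ t = ∫ w in a₀..t, gU w := rfl
      have e2 : Φ u = ∫ w in a₀..u, gU w := rfl
      rw [e1, e2, ← h4]
      ring
    have hgU0 : ∀ w, 0 ≤ gU w := fun w => Set.indicator_nonneg (fun _ _ => norm_nonneg _) w
    have hΦmono : ∀ t u, a₀ ≤ t → t ≤ u → u ≤ b₀ → Φ t ≤ Φ u := by
      intro t u h1 h2 h3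
      have h4 := hΦadd t u h1 h2 h3
      have h5 : 0 ≤ ∫ w in t..u, gU w :=
        intervalIntegral.integral_nonneg h2 (fun w _ => hgU0 w)
      linarith
    have hΦcont : ContinuousOn Φ (Set.Icc a₀ b₀) := by
      have h6 : IntegrableOn gU (Set.uIcc a₀ b₀) volume := by
        rwa [Set.uIcc_of_le hab₀]
      have := intervalIntegral.continuousOn_primitive_interval h6
      rwa [Set.uIcc_of_le hab₀] at this
    have hΦa₀ : Φ a₀ = 0 := intervalIntegral.integral_same
    have hΦtop : Φ b₀ ≤ ε₂ := by
      have e1 : Φ b₀ = ∫ w in Set.Ioc a₀ b₀, gU w := intervalIntegral.integral_of_le hab₀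
      have e2 : ∫ w in Set.Ioc a₀ b₀, gU w = ∫ w in U ∩ Set.Ioc a₀ b₀, ‖f w‖ := by
        rw [hgUdef, MeasureTheory.integral_indicator hUo.measurableSet,
          Measure.restrict_restrict hUo.measurableSet]
      have hIocO : Set.Ioc a₀ b₀ ⊆ Set.Ioo a b := fun w hw =>
        ⟨haa.trans hw.1, lt_of_le_of_lt hw.2 hbb⟩
      have e3 : ∫ w in U ∩ Set.Ioc a₀ b₀, ‖f w‖ = ∫ w in U ∩ Set.Ioc a₀ b₀, ‖fh w‖ := by
        apply setIntegral_congr_fun (hUo.measurableSet.inter measurableSet_Ioc)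
        intro w hw
        show ‖f w‖ = ‖fh w‖
        rw [hfhdef, Set.indicator_of_mem (hIocO hw.2)]
      have e4 : ∫ w in U ∩ Set.Ioc a₀ b₀, ‖fh w‖ =
          (∫⁻ w in U ∩ Set.Ioc a₀ b₀, ‖fh w‖₊ ∂volume).toReal :=
        integral_norm_eq_lintegral_enorm (hfhint.1.restrict)
      have e5 : (∫⁻ w in U ∩ Set.Ioc a₀ b₀, ‖fh w‖₊ ∂volume) ≤ ∫⁻ w in U, ‖fh w‖₊ ∂volume :=
        lintegral_mono_set Set.inter_subset_left
      have e6 : (∫⁻ w in U ∩ Set.Ioc a₀ b₀, ‖fh w‖₊ ∂volume).toReal ≤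
          (∫⁻ w in U, ‖fh w‖₊ ∂volume).toReal :=
        ENNReal.toReal_mono (hUsmall.trans ENNReal.ofReal_lt_top).ne e5
      have e7 : (∫⁻ w in U, ‖fh w‖₊ ∂volume).toReal ≤ ε₂ :=
        ENNReal.toReal_le_of_le_ofReal hε₂.le hUsmall.le
      rw [e1, e2, e3, e4]
      exact e6.trans e7
    -- the barrier function and the connectedness argument
    set h : ℝ → ℝ := fun t => V (s.toFun t j) with hhdef
    set M : ℝ → ℝ := fun t => h a₀ + 2*ε₁*(t - a₀) + (L:ℝ) * Φ t with hMdef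
    have hMval : ∀ t, M t = h a₀ + 2*ε₁*(t - a₀) + (L:ℝ) * Φ t := fun t => rfl
    set S : Set ℝ := Set.Icc a₀ b₀ ∩ (fun t => h t - M t) ⁻¹' Set.Iic 0 with hSdef
    have hhcont : ContinuousOn h (Set.Icc a₀ b₀) :=
      hVcont.comp (hφcont.mono hsubI) (fun t ht => hN t (hsubI ht))
    have hMcont : ContinuousOn M (Set.Icc a₀ b₀) := by
      apply ContinuousOn.add
      · exact (continuousOn_const.add
          ((continuousOn_const.mul (continuousOn_id.sub continuousOn_const))))
      · exact continuousOn_const.mul hΦcont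
    have hScl : IsClosed S :=
      (hhcont.sub hMcont).preimage_isClosed_of_isClosed isClosed_Icc isClosed_Iic
    have haS : a₀ ∈ S := by
      refine ⟨⟨le_rfl, hab₀⟩, ?_⟩
      show h a₀ - M a₀ ≤ 0
      rw [hMval, hΦa₀]
      ring_nf
      simp
    have hSbdd : BddAbove S := ⟨b₀, fun t ht => ht.1.2⟩
    set t₁ := sSup S with ht₁def
    have ht₁S : t₁ ∈ S := hScl.csSup_mem ⟨a₀, haS⟩ hSbdd
    have ht₁I : t₁ ∈ Set.Icc a₀ b₀ := ht₁S.1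
    have hbS : b₀ ∈ S := by
      rcases eq_or_lt_of_le ht₁I.2 with heq | hlt₁
      · rwa [← heq]
      exfalso
      obtain ⟨W, hWo, hxW, hWlip⟩ := hLoc t₁ ht₁I
      have hct : ContinuousWithinAt (fun t => s.toFun t j) (Set.Icc a b) t₁ :=
        hφcont _ (hsubI ht₁I)
      obtain ⟨δW, hδW0, hδWsub⟩ := Metric.mem_nhdsWithin_iff.mp
        (hct.preimage_mem_nhdsWithin (hWo.mem_nhds hxW))
      have ht₁ab : a ≤ t₁ := haa.le.trans ht₁I.1
      have hMt : h t₁ - M t₁ ≤ 0 := ht₁S.2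
      by_cases hU : t₁ ∈ U
      · -- bad-point case: propagate using the primitive Φ
        obtain ⟨δU, hδU0, hδUsub⟩ := Metric.isOpen_iff.mp hUo t₁ hU
        set δ₀ := min δW δU with hδ₀def
        have hδ₀ : 0 < δ₀ := lt_min hδW0 hδU0
        set u := min (t₁ + δ₀/2) b₀ with hudef
        have htu : t₁ < u := lt_min (by linarith) hlt₁
        have hub : u ≤ b₀ := min_le_right _ _
        have hut : u - t₁ ≤ δ₀/2 := by
          have h7 := min_le_left (t₁ + δ₀/2) b₀
          have : u ≤ t₁ + δ₀/2 := h7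
          linarith
        have hIccU : Set.Icc t₁ u ⊆ U := by
          intro w hw
          apply hδUsub
          rw [Metric.mem_ball, Real.dist_eq, abs_of_nonneg (by linarith [hw.1])]
          have h8 : w - t₁ ≤ u - t₁ := by linarith [hw.2]
          have h9 : w - t₁ ≤ δ₀/2 := h8.trans hut
          have h10 : δ₀ ≤ δU := min_le_right _ _
          linarith
        have huab : u ∈ Set.Icc a b := ⟨ht₁ab.trans htu.le, hub.trans hbb.le⟩
        have hφuW : s.toFun u j ∈ W := by
          apply hδWsub
          refine ⟨?_, huab⟩
          rw [Metric.mem_ball, Real.dist_eq, abs_of_nonneg (by linarith)]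
          have h10 : δ₀ ≤ δW := min_le_left _ _
          linarith
        have hnb : ‖∫ w in t₁..u, f w‖ ≤ ∫ w in t₁..u, ‖f w‖ :=
          intervalIntegral.norm_integral_le_integral_norm htu.le
        have hcongr : ∫ w in t₁..u, ‖f w‖ = ∫ w in t₁..u, gU w := by
          apply intervalIntegral.integral_congr
          intro w hw
          rw [Set.uIcc_of_le htu.le] at hw
          show ‖f w‖ = gU w
          rw [hgUdef]
          exact (Set.indicator_of_mem (hIccU hw) (fun w => ‖f w‖)).symm
        have hdista : h u - h t₁ ≤ (L:ℝ) * (Φ u - Φ t₁) := by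
          have hld := hWlip.dist_le_mul _ hφuW _ hxW
          have hde : dist (s.toFun u j) (s.toFun t₁ j) = ‖∫ w in t₁..u, f w‖ := by
            rw [dist_eq_norm, hdiff t₁ u ht₁ab htu.le (hub.trans hbb.le)]
          have h11 : h u - h t₁ ≤ dist (h u) (h t₁) := by
            rw [Real.dist_eq]; exact le_abs_self _
          have h12 : dist (h u) (h t₁) ≤ (L:ℝ) * (Φ u - Φ t₁) := by
            calc dist (h u) (h t₁) ≤ (L:ℝ) * dist (s.toFun u j) (s.toFun t₁ j) := hld
            _ = (L:ℝ) * ‖∫ w in t₁..u, f w‖ := by rw [hde]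
            _ ≤ (L:ℝ) * (Φ u - Φ t₁) := by
                rw [hΦadd t₁ u ht₁I.1 htu.le hub, ← hcongr]
                exact mul_le_mul_of_nonneg_left hnb hL0
          linarith
        have huS : u ∈ S := by
          refine ⟨⟨ht₁I.1.trans htu.le, hub⟩, ?_⟩
          show h u - M u ≤ 0
          rw [hMval] at hMt ⊢
          nlinarith [hdista, hε₁.le, htu.le]
        exact absurd (le_csSup hSbdd huS) (not_le.2 htu)
      · -- good-point case: use the Clarke derivative bound
        have ht₁O : t₁ ∈ Set.Ioo a b := hsubO ht₁I
        have hgood := hZgood t₁ (fun hZt => hU (hZU hZt)) ht₁O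
        set x : ES n := s.toFun t₁ j with hxdef
        set v : ES n := f t₁ with hvdef
        have hxCNK : x ∈ (H.C ∩ N) \ K :=
          ⟨⟨hC' t₁ ht₁O, hN t₁ (hsubI ht₁I)⟩, hnK t₁ (hsubI ht₁I)⟩
        have hclarke : clarkeDeriv V x v ≤ 0 := h22a x hxCNK v hgood.1
        obtain ⟨ρ, hρ0, hρsub⟩ := Metric.isOpen_iff.mp hWo x hxW
        have hbd : ∀ᶠ p : ES n × ℝ in (𝓝 x) ×ˢ (𝓝[>] (0:ℝ)),
            |(V (p.1 + p.2 • v) - V p.1) / p.2| ≤ (L:ℝ) * ‖v‖ := by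
          have h1 : ∀ᶠ y in 𝓝 x, y ∈ Metric.ball x (ρ/2) :=
            Metric.ball_mem_nhds x (by positivity)
          have h2 : ∀ᶠ τ' in 𝓝[>] (0:ℝ), τ' ∈ Set.Ioo (0:ℝ) (ρ/(2*(‖v‖+1))) :=
            Ioo_mem_nhdsGT_of_mem ⟨le_rfl, by positivity⟩
          filter_upwards [h1.prod_mk h2]
          rintro ⟨y, τ'⟩ ⟨hy, hτ'⟩
          have hyball : ‖y - x‖ < ρ/2 := by
            rw [← dist_eq_norm]; exact hy
          have hyW : y ∈ W := hρsub (by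
            rw [Metric.mem_ball, dist_eq_norm]
            linarith)
          have hτv : τ' * ‖v‖ ≤ ρ/2 := by
            have hτle : τ' ≤ ρ/(2*(‖v‖+1)) := hτ'.2.le
            have hv1 : ‖v‖ ≤ ‖v‖ + 1 := by linarith
            have e8 : τ' * ‖v‖ ≤ (ρ/(2*(‖v‖+1))) * (‖v‖+1) :=
              mul_le_mul hτle hv1 (norm_nonneg _) (by positivity)
            have e9 : (ρ/(2*(‖v‖+1))) * (‖v‖+1) = ρ/2 := by
              field_simp
            linarith [e8, e9.le]
          have hyvW : y + τ' • v ∈ W := by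
            apply hρsub
            rw [Metric.mem_ball, dist_eq_norm]
            have e10 : y + τ' • v - x = (y - x) + τ' • v := by abel
            rw [e10]
            calc ‖(y - x) + τ' • v‖ ≤ ‖y - x‖ + ‖τ' • v‖ := norm_add_le _ _
            _ = ‖y - x‖ + τ' * ‖v‖ := by
                rw [norm_smul, Real.norm_eq_abs, abs_of_pos hτ'.1]
            _ < ρ := by linarith
          have hd := hWlip.dist_le_mul _ hyvW _ hyW
          have e11 : dist (y + τ' • v) y = τ' * ‖v‖ := by
            rw [dist_eq_norm]
            have : y + τ' • v - y = τ' • v := by abel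
            rw [this, norm_smul, Real.norm_eq_abs, abs_of_pos hτ'.1]
          rw [Real.dist_eq, e11] at hd
          rw [abs_div, abs_of_pos hτ'.1, div_le_iff₀ hτ'.1]
          calc |V (y + τ' • v) - V y| ≤ (L:ℝ) * (τ' * ‖v‖) := hd
          _ = (L:ℝ) * ‖v‖ * τ' := by ring
        have hbdd : IsBoundedUnder (· ≤ ·) ((𝓝 x) ×ˢ (𝓝[>] (0:ℝ)))
            (fun p : ES n × ℝ => (V (p.1 + p.2 • v) - V p.1) / p.2) :=
          ⟨(L:ℝ) * ‖v‖, by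
            rw [Filter.eventually_map]
            exact hbd.mono fun p hp => (abs_le.mp hp).2⟩
        have hlim : limsup (fun p : ES n × ℝ => (V (p.1 + p.2 • v) - V p.1) / p.2)
            ((𝓝 x) ×ˢ (𝓝[>] (0:ℝ))) < ε₁ := lt_of_le_of_lt hclarke hε₁
        have hev := eventually_lt_of_limsup_lt hlim hbdd
        obtain ⟨pa, hpa, pb, hpb, himp⟩ := Filter.eventually_prod_iff.mp hev
        have hpax : pa x := hpa.self_of_nhds
        obtain ⟨δB, hδB0, hδBsub⟩ := mem_nhdsGT_iff_exists_Ioo_subset.mp hpb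
        have havg : ∀ᶠ ρ' in 𝓝[>] (0:ℝ),
            (⨍ y in Metric.closedBall t₁ ρ', ‖fh y - v‖) < ε₁ / (2*((L:ℝ)+1)) := by
          have hv : fh t₁ = v := Set.indicator_of_mem ht₁O f
          have h13 := hgood.2
          rw [hv] at h13
          exact h13.eventually_lt_const (by positivity)
        obtain ⟨δL, hδL0, hδLsub⟩ := mem_nhdsGT_iff_exists_Ioo_subset.mp havg
        set δ₁ : ℝ := min (min δW δB) (min δL (ρ/(‖v‖+1))) with hδ₁def
        have hδ₁0 : 0 < δ₁ :=
          lt_min (lt_min hδW0 hδB0) (lt_min hδL0 (by positivity))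
        set u := min (t₁ + δ₁/2) b₀ with hudef
        have htu : t₁ < u := lt_min (by linarith) hlt₁
        have hub : u ≤ b₀ := min_le_right _ _
        set τ : ℝ := u - t₁ with hτdef
        have hτ0 : 0 < τ := by simp only [hτdef]; linarith
        have hτδ : τ ≤ δ₁/2 := by
          have h14 : u ≤ t₁ + δ₁/2 := min_le_left _ _
          simp only [hτdef]; linarith
        have hτhalf : τ < δ₁ := by linarith
        have hτW : τ < δW := lt_of_lt_of_le hτhalf ((min_le_left _ _).trans (min_le_left _ _))
        have hτB : τ < δB := lt_of_lt_of_le hτhalf ((min_le_left _ _).trans (min_le_right _ _))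
        have hτL : τ < δL := lt_of_lt_of_le hτhalf ((min_le_right _ _).trans (min_le_left _ _))
        have hτρ : τ < ρ/(‖v‖+1) :=
          lt_of_lt_of_le hτhalf ((min_le_right _ _).trans (min_le_right _ _))
        have hpbτ : pb τ := hδBsub ⟨hτ0, hτB⟩
        have hτvρ : τ * ‖v‖ < ρ := by
          have h16 : τ * (‖v‖+1) < ρ := (lt_div_iff₀ (by positivity)).mp hτρ
          nlinarith [hτ0.le, norm_nonneg v]
        have hxτW : x + τ • v ∈ W := by
          apply hρsub
          rw [Metric.mem_ball, dist_eq_norm]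
          have : x + τ • v - x = τ • v := by abel
          rw [this, norm_smul, Real.norm_eq_abs, abs_of_pos hτ0]
          exact hτvρ
        have huab : u ∈ Set.Icc a b := ⟨ht₁ab.trans htu.le, hub.trans hbb.le⟩
        have hφuW : s.toFun u j ∈ W := by
          apply hδWsub
          refine ⟨?_, huab⟩
          rw [Metric.mem_ball, Real.dist_eq, abs_of_nonneg (by linarith)]
          simp only [hτdef] at hτW
          linarith [hτW]
        -- term 1 : directional estimate
        have ht1 : V (x + τ • v) - V x < ε₁ * τ := by
          have h18 := himp hpax hpbτ
          rw [div_lt_iff₀ hτ0] at h18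
          linarith
        -- term 2 : Lebesgue point estimate
        have hIoc : Set.Ioc t₁ u ⊆ Set.Ioo a b := fun w hw =>
          ⟨ht₁O.1.trans hw.1, lt_of_le_of_lt (hw.2.trans hub) hbb⟩
        have hfm : IntegrableOn (fun w => ‖fh w - v‖) (Metric.closedBall t₁ τ) volume := by
          apply Integrable.norm
          exact (hfhint.integrableOn).sub
            (integrableOn_const measure_closedBall_lt_top.ne)
        have hfiv : IntervalIntegrable f volume t₁ u := hfab.mono_set (by
          rw [Set.uIcc_of_le htu.le, Set.uIcc_of_le hab]
          exact Set.Icc_subset_Icc ht₁ab (hub.trans hbb.le))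
        have ht2 : ∫ w in t₁..u, ‖f w - v‖ ≤ (ε₁/((L:ℝ)+1)) * τ := by
          have e1 : (∫ w in t₁..u, ‖f w - v‖) = ∫ w in Set.Ioc t₁ u, ‖f w - v‖ :=
            intervalIntegral.integral_of_le htu.le
          have e2 : (∫ w in Set.Ioc t₁ u, ‖f w - v‖) = ∫ w in Set.Ioc t₁ u, ‖fh w - v‖ := by
            apply setIntegral_congr_fun measurableSet_Ioc
            intro w hw
            show ‖f w - v‖ = ‖fh w - v‖
            rw [hfhdef, Set.indicator_of_mem (hIoc hw)]
          have hsubball : Set.Ioc t₁ u ⊆ Metric.closedBall t₁ τ := by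
            intro w hw
            rw [Metric.mem_closedBall, Real.dist_eq, abs_of_nonneg (by linarith [hw.1.le])]
            simp only [hτdef]
            linarith [hw.2]
          have e3 : (∫ w in Set.Ioc t₁ u, ‖fh w - v‖) ≤
              ∫ w in Metric.closedBall t₁ τ, ‖fh w - v‖ := by
            apply setIntegral_mono_set hfm
            · filter_upwards with w using norm_nonneg _
            · exact HasSubset.Subset.eventuallyLE hsubball
          have e4 : (∫ w in Metric.closedBall t₁ τ, ‖fh w - v‖) =
              (2*τ) * ⨍ y in Metric.closedBall t₁ τ, ‖fh y - v‖ := by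
            rw [setAverage_eq, Real.volume_real_closedBall (by positivity),
              smul_eq_mul, ← mul_assoc, mul_inv_cancel₀ (by positivity), one_mul]
          have e5 : (⨍ y in Metric.closedBall t₁ τ, ‖fh y - v‖) < ε₁ / (2*((L:ℝ)+1)) :=
            hδLsub ⟨hτ0, hτL⟩
          have e6 : (2*τ) * (⨍ y in Metric.closedBall t₁ τ, ‖fh y - v‖) ≤
              (2*τ) * (ε₁ / (2*((L:ℝ)+1))) :=
            mul_le_mul_of_nonneg_left e5.le (by positivity)
          have e7 : (2*τ) * (ε₁ / (2*((L:ℝ)+1))) = (ε₁/((L:ℝ)+1)) * τ := by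
            field_simp
          rw [e1, e2]
          calc (∫ w in Set.Ioc t₁ u, ‖fh w - v‖) ≤
              ∫ w in Metric.closedBall t₁ τ, ‖fh w - v‖ := e3
          _ = (2*τ) * ⨍ y in Metric.closedBall t₁ τ, ‖fh y - v‖ := e4
          _ ≤ (2*τ) * (ε₁ / (2*((L:ℝ)+1))) := e6
          _ = (ε₁/((L:ℝ)+1)) * τ := e7
        -- combine
        have hkey : ‖s.toFun u j - (x + τ • v)‖ ≤ ∫ w in t₁..u, ‖f w - v‖ := by
          have e6 : s.toFun u j - (x + τ • v) = ∫ w in t₁..u, (f w - v) := by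
            rw [intervalIntegral.integral_sub hfiv intervalIntegrable_const,
              intervalIntegral.integral_const]
            have e7 : s.toFun u j - x = ∫ w in t₁..u, f w :=
              hdiff t₁ u ht₁ab htu.le (hub.trans hbb.le)
            have e8 : (u - t₁) • v = τ • v := by rw [hτdef]
            rw [← e7, e8]
            abel
          rw [e6]
          exact intervalIntegral.norm_integral_le_integral_norm htu.le
        have hVd : h u - V (x + τ • v) ≤ (L:ℝ) * ‖s.toFun u j - (x + τ • v)‖ := by
          have hd := hWlip.dist_le_mul _ hφuW _ hxτW
          rw [Real.dist_eq, dist_eq_norm] at hd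
          calc h u - V (x + τ • v) ≤ |h u - V (x + τ • v)| := le_abs_self _
          _ ≤ (L:ℝ) * ‖s.toFun u j - (x + τ • v)‖ := hd
        have hLfrac : (L:ℝ) * ((ε₁/((L:ℝ)+1)) * τ) ≤ ε₁ * τ := by
          rw [div_mul_eq_mul_div, mul_div_assoc']
          rw [div_le_iff₀ (by positivity)]
          nlinarith [hε₁.le, hτ0.le, hL0]
        have hfinal : h u ≤ h t₁ + 2*ε₁*τ := by
          have c1 : (L:ℝ) * ‖s.toFun u j - (x + τ • v)‖ ≤
              (L:ℝ) * ((ε₁/((L:ℝ)+1)) * τ) :=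
            mul_le_mul_of_nonneg_left (hkey.trans ht2) hL0
          have hVx : V x = h t₁ := rfl
          have c2 : h u ≤ V (x + τ • v) + (L:ℝ) * ((ε₁/((L:ℝ)+1)) * τ) := by
            linarith [hVd, c1]
          have c3 : h u ≤ V x + ε₁*τ + ε₁*τ := by
            calc h u ≤ V (x + τ • v) + (L:ℝ) * ((ε₁/((L:ℝ)+1)) * τ) := c2
            _ ≤ V (x + τ • v) + ε₁ * τ := by linarith [hLfrac]
            _ ≤ V x + ε₁ * τ + ε₁ * τ := by linarith [ht1]
          linarith [hVx, c3]
        have huS : u ∈ S := by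
          refine ⟨⟨ht₁I.1.trans htu.le, hub⟩, ?_⟩
          show h u - M u ≤ 0
          have hΦm : Φ t₁ ≤ Φ u := hΦmono t₁ u ht₁I.1 htu.le hub
          rw [hMval] at hMt ⊢
          have hτexp : τ = u - t₁ := rfl
          nlinarith [hfinal, hL0, hΦm]
        exact absurd (le_csSup hSbdd huS) (not_le.2 htu)
    -- conclude the main estimate
    have hout : h b₀ - M b₀ ≤ 0 := hbS.2
    have hεD : ε₁ * (4*(b-a)+4) = ε := by
      rw [hε₁def]; field_simp
    have hεL : ε₂ * (2*((L:ℝ)+1)) = ε := by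
      rw [hε₂def]; field_simp
    have hb1 : 2*ε₁*(b₀ - a₀) ≤ ε/2 := by nlinarith [hε₁.le, hε.le]
    have hb2 : (L:ℝ) * Φ b₀ ≤ ε/2 := by
      have h19 : (L:ℝ)*Φ b₀ ≤ (L:ℝ)*ε₂ := mul_le_mul_of_nonneg_left hΦtop hL0
      nlinarith [hL0, hε₂.le]
    have := hMval b₀
    show h b₀ ≤ h a₀ + ε
    rw [hMval] at hout
    linarith
  -- pass to the limit at the endpoints
  refine le_of_forall_pos_le_add ?_
  intro ε hε
  have hε3 : 0 < ε/3 := by linarith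
  have haI : a ∈ Set.Icc a b := Set.left_mem_Icc.2 hab
  have hbI : b ∈ Set.Icc a b := Set.right_mem_Icc.2 hab
  have hhfull : ContinuousOn (fun t => V (s.toFun t j)) (Set.Icc a b) :=
    hVcont.comp hφcont (fun t ht => hN t ht)
  have hVca : ContinuousWithinAt (fun t => V (s.toFun t j)) (Set.Icc a b) a := hhfull a haI
  have hVcb : ContinuousWithinAt (fun t => V (s.toFun t j)) (Set.Icc a b) b := hhfull b hbI
  -- choose a₀
  have hne1 : (𝓝[Set.Ioo a b] a).NeBot := by
    apply mem_closure_iff_nhdsWithin_neBot.1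
    rw [closure_Ioo hlt.ne]
    exact haI
  have hev1 : ∀ᶠ t in 𝓝[Set.Ioo a b] a,
      |V (s.toFun t j) - V (s.toFun a j)| < ε/3 ∧ t ∈ Set.Ioo a b := by
    have h1 : ∀ᶠ t in 𝓝[Set.Icc a b] a, |V (s.toFun t j) - V (s.toFun a j)| < ε/3 := by
      have h0 : ∀ᶠ y in 𝓝 (V (s.toFun a j)), |y - V (s.toFun a j)| < ε/3 := by
        filter_upwards [Metric.ball_mem_nhds _ hε3] with y hy
        rw [Metric.mem_ball, Real.dist_eq] at hy
        exact hy
      exact hVca.eventually h0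
    have h2 : 𝓝[Set.Ioo a b] a ≤ 𝓝[Set.Icc a b] a :=
      nhdsWithin_mono a Set.Ioo_subset_Icc_self
    filter_upwards [h2 h1, self_mem_nhdsWithin] with t h3 h4
    exact ⟨h3, h4⟩
  obtain ⟨a₀, ha₀1, ha₀2⟩ := hev1.exists
  -- choose b₀
  have hne2 : (𝓝[Set.Ioo a₀ b] b).NeBot := by
    apply mem_closure_iff_nhdsWithin_neBot.1
    rw [closure_Ioo (ne_of_lt ha₀2.2)]
    exact ⟨ha₀2.2.le, le_rfl⟩
  have hev2 : ∀ᶠ t in 𝓝[Set.Ioo a₀ b] b,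
      |V (s.toFun t j) - V (s.toFun b j)| < ε/3 ∧ t ∈ Set.Ioo a₀ b := by
    have h1 : ∀ᶠ t in 𝓝[Set.Icc a b] b, |V (s.toFun t j) - V (s.toFun b j)| < ε/3 := by
      have h0 : ∀ᶠ y in 𝓝 (V (s.toFun b j)), |y - V (s.toFun b j)| < ε/3 := by
        filter_upwards [Metric.ball_mem_nhds _ hε3] with y hy
        rw [Metric.mem_ball, Real.dist_eq] at hy
        exact hy
      exact hVcb.eventually h0
    have h2 : 𝓝[Set.Ioo a₀ b] b ≤ 𝓝[Set.Icc a b] b := by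
      apply nhdsWithin_mono
      intro t ht
      exact ⟨ha₀2.1.le.trans ht.1.le, ht.2.le⟩
    filter_upwards [h2 h1, self_mem_nhdsWithin] with t h3 h4
    exact ⟨h3, h4⟩
  obtain ⟨b₀, hb₀1, hb₀2⟩ := hev2.exists
  have hm := main a₀ b₀ ha₀2.1 hb₀2.1.le hb₀2.2 (ε/3) hε3
  have q1 : V (s.toFun a₀ j) < V (s.toFun a j) + ε/3 := by
    have := abs_lt.mp ha₀1
    linarith [this.2]
  have q2 : V (s.toFun b j) < V (s.toFun b₀ j) + ε/3 := by
    have := abs_lt.mp hb₀1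
    linarith [this.1]
  linarith


set_option maxHeartbeats 1000000 in
/-- Forward invariance of a compact sublevel set along a flow interval. -/
lemma seg {H : HybridSystem n} {K N : Set (ES n)} (hNopen : IsOpen N)
    {V : ES n → ℝ} (hVcont : ContinuousOn V N)
    (hVlip : LocallyLipschitzOnNhdOf V (H.C ∩ N))
    (h22a : ∀ x ∈ (H.C ∩ N) \ K, uC_le H V x 0)
    {r : ℝ≥0∞} (hLrcl : IsClosed (sublevel V N r))
    {s : HybridArc n} (hs : IsSolution H s)
    (hcon : ∀ (t : ℝ) (jj : ℕ), (t, jj) ∈ s.dom → s.toFun t jj ∉ K)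
    {j : ℕ} {a b : ℝ} (hab : a ≤ b) (ha : (a, j) ∈ s.dom) (hb : (b, j) ∈ s.dom)
    (haLr : s.toFun a j ∈ sublevel V N r) :
    ∀ t ∈ Set.Icc a b, s.toFun t j ∈ sublevel V N r := by
  have hdom := mem_dom_Icc s ha hb hab
  have hφcont := arc_continuousOn hs ha hb hab
  set S : Set ℝ := {t ∈ Set.Icc a b | ∀ u ∈ Set.Icc a t, s.toFun u j ∈ sublevel V N r}
    with hSdef
  have haS : a ∈ S := by
    refine ⟨⟨le_rfl, hab⟩, ?_⟩
    intro u hu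
    have : u = a := le_antisymm hu.2 hu.1
    rwa [this]
  have hSbdd : BddAbove S := ⟨b, fun t ht => ht.1.2⟩
  set t₁ := sSup S with ht₁def
  have haT : a ≤ t₁ := le_csSup hSbdd haS
  have hTb : t₁ ≤ b := csSup_le ⟨a, haS⟩ (fun t ht => ht.1.2)
  have hbelow : ∀ u, a ≤ u → u < t₁ → s.toFun u j ∈ sublevel V N r := by
    intro u hu hut
    obtain ⟨t, htS, hlt⟩ := exists_lt_of_lt_csSup ⟨a, haS⟩ hut
    exact htS.2 u ⟨hu, hlt.le⟩
  have ht₁mem : s.toFun t₁ j ∈ sublevel V N r := by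
    rcases eq_or_lt_of_le haT with heq | hlt
    · rw [← heq]; exact haLr
    · have hne : (𝓝[Set.Ico a t₁] t₁).NeBot := by
        apply mem_closure_iff_nhdsWithin_neBot.1
        rw [closure_Ico hlt.ne]
        exact ⟨haT, le_rfl⟩
      have hct : ContinuousWithinAt (fun t => s.toFun t j) (Set.Ico a t₁) t₁ :=
        (hφcont t₁ ⟨haT, hTb⟩).mono (fun u hu => ⟨hu.1, hu.2.le.trans hTb⟩)
      apply hLrcl.mem_of_tendsto hct
      filter_upwards [self_mem_nhdsWithin] with u hu
      exact hbelow u hu.1 hu.2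
  have ht₁S : t₁ ∈ S := by
    refine ⟨⟨haT, hTb⟩, ?_⟩
    intro u hu
    rcases eq_or_lt_of_le hu.2 with heq | hlt
    · rw [heq]; exact ht₁mem
    · exact hbelow u hu.1 hlt
  have ht₁b : t₁ = b := by
    by_contra hne
    have hlt : t₁ < b := lt_of_le_of_ne hTb hne
    have hN1 : s.toFun t₁ j ∈ N := ht₁mem.1
    have hct : ContinuousWithinAt (fun t => s.toFun t j) (Set.Icc a b) t₁ :=
      hφcont t₁ ⟨haT, hTb⟩
    obtain ⟨δ, hδ0, hδsub⟩ := Metric.mem_nhdsWithin_iff.mp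
      (hct.preimage_mem_nhdsWithin (hNopen.mem_nhds hN1))
    set u₁ := min (t₁ + δ/2) b with hu₁def
    have htu : t₁ < u₁ := lt_min (by linarith) hlt
    have hub : u₁ ≤ b := min_le_right _ _
    have hNall : ∀ w ∈ Set.Icc a u₁, s.toFun w j ∈ N := by
      intro w hw
      rcases lt_or_ge w t₁ with h1 | h1
      · exact (hbelow w hw.1 h1).1
      · rcases eq_or_lt_of_le h1 with heq | h2
        · rw [← heq]; exact hN1
        · apply hδsub
          refine ⟨?_, ⟨hw.1, hw.2.trans hub⟩⟩
          rw [Metric.mem_ball, Real.dist_eq, abs_of_pos (by linarith)]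
          have h3 : w - t₁ ≤ u₁ - t₁ := by linarith [hw.2]
          have h4 : u₁ ≤ t₁ + δ/2 := min_le_left _ _
          linarith
    have hu₁S : u₁ ∈ S := by
      refine ⟨⟨haT.trans htu.le, hub⟩, ?_⟩
      intro w hw
      rcases le_or_gt w t₁ with h1 | h1
      · exact ht₁S.2 w ⟨hw.1, h1⟩
      · have hwdom : (w, j) ∈ s.dom := hdom w ⟨hw.1, hw.2.trans hub⟩
        have hVle : V (s.toFun w j) ≤ V (s.toFun a j) := by
          apply flow_mono hNopen hVcont hVlip h22a hs hw.1 ha hwdom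
          · intro z hz
            exact hNall z ⟨hz.1, hz.2.trans hw.2⟩
          · intro z hz
            exact hcon z j (hdom z ⟨hz.1, hz.2.trans (hw.2.trans hub)⟩)
        exact ⟨hNall w hw, le_trans (ENNReal.ofReal_le_ofReal hVle) haLr.2⟩
    exact absurd (le_csSup hSbdd hu₁S) (not_le.2 htu)
  intro t ht
  exact (ht₁b ▸ ht₁S).2 t ht

/-- Lyapunov conditions (decrease at jumps) sufficient for `◇p`. -/
theorem eventually_sufficient_jump
    (n : ℕ) (H : HybridSystem n) (p : ES n → Prop) (K : Set (ES n))
    (hK : K = {x ∈ H.X | p x}) (hKne : K.Nonempty) (hKcl : IsClosed K)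
    (N : Set (ES n)) (hNopen : IsOpen N) (hKN : K ⊆ N) (hNX : N ⊆ H.X)
    (hGN : ∀ x ∈ N, H.G x ⊆ N)
    (V : ES n → ℝ) (hVcont : ContinuousOn V N) (hVnn : ∀ x ∈ N, 0 ≤ V x)
    (hVlip : LocallyLipschitzOnNhdOf V (H.C ∩ N))
    (c : ℝ) (hc : 0 < c)
    (h21 : ∀ x ∈ N ∩ (closure H.C ∪ H.D), ¬ p x →
      ∀ s : HybridArc n, IsMaximal H s → s.toFun 0 0 = x →
        (⌈V x / c⌉₊ : ℝ≥0∞) ≤ domSupJ s)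
    (hpd : PosDefWrt V K N)
    (h22a : ∀ x ∈ (H.C ∩ N) \ K, uC_le H V x 0)
    (h22b : ∀ x ∈ (H.D ∩ N) \ K, uD_le H V x (-(min c (V x)))) :
    ∀ r : ℝ≥0∞, IsCompact (sublevel V N r) →
      ∀ s : HybridArc n, IsMaximal H s →
        s.toFun 0 0 ∈ sublevel V N r ∩ (closure H.C ∪ H.D) →
          ∃ t' : ℝ, ∃ j' : ℕ, (t', j') ∈ s.dom ∧ s.toFun t' j' ∈ K := by
  intro r hrcomp s hmax hs0
  obtain ⟨hs0lvl, hs0init⟩ := hs0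
  have hLrcl : IsClosed (sublevel V N r) := hrcomp.isClosed
  have hsol : IsSolution H s := hmax.1
  by_contra hno
  push_neg at hno
  set x0 := s.toFun 0 0 with hx0def
  have hx0N : x0 ∈ N := hs0lvl.1
  have hx0K : x0 ∉ K := hno 0 0 s.zero_mem
  have hVx0 : 0 < V x0 := hpd.2 x0 ⟨hx0N, hx0K⟩
  have hpx0 : ¬ p x0 := fun hp => hx0K (by rw [hK]; exact ⟨hNX hx0N, hp⟩)
  have hJ : (⌈V x0 / c⌉₊ : ℝ≥0∞) ≤ domSupJ s :=
    h21 x0 ⟨hx0N, hs0init⟩ hpx0 s hmax rfl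
  set m := ⌈V x0 / c⌉₊ with hmdef
  have hm1 : 1 ≤ m := Nat.ceil_pos.mpr (div_pos hVx0 hc)
  have hexJ : ∃ tq : ℝ × ℕ, tq ∈ s.dom ∧ m ≤ tq.2 := by
    by_contra hno2
    push_neg at hno2
    have hle : domSupJ s ≤ ((m - 1 : ℕ) : ℝ≥0∞) := by
      refine iSup₂_le ?_
      intro tq hq
      have h1 : tq.2 ≤ m - 1 := Nat.le_sub_one_of_lt (hno2 tq hq)
      exact_mod_cast h1
    have h2 : (m : ℝ≥0∞) ≤ ((m - 1 : ℕ) : ℝ≥0∞) := hJ.trans hle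
    have h3 : m ≤ m - 1 := by exact_mod_cast h2
    omega
  obtain ⟨⟨t, J⟩, hqdom, hmJ⟩ := hexJ
  obtain ⟨τ, hτ0, hτend, hτmono, hiff⟩ := s.htd.2 (t, J) hqdom
  have hcon : ∀ (t' : ℝ) (jj : ℕ), (t', jj) ∈ s.dom → s.toFun t' jj ∉ K := hno
  -- chain of flow segments and jumps
  have chain : ∀ i, i ≤ J → (τ i, i) ∈ s.dom ∧ s.toFun (τ i) i ∈ sublevel V N r ∧
      V (s.toFun (τ i) i) ≤ V x0 - (i : ℝ) * c := by
    intro i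
    induction i with
    | zero =>
      intro _
      rw [hτ0]
      exact ⟨s.zero_mem, hs0lvl, by simp [hx0def]⟩
    | succ i ih =>
      intro hi
      have hiJ : i ≤ J := (Nat.le_succ i).trans hi
      obtain ⟨hdi, hLri, hVi⟩ := ih hiJ
      have hstep : τ i ≤ τ (i + 1) := hτmono i hiJ
      have hd2 : (τ (i + 1), i) ∈ s.dom := by
        have h4 : τ (i + 1) ≤ τ (J + 1) := by
          clear hVi hLri hdi
          have hmon : ∀ k l : ℕ, k ≤ l → l ≤ J + 1 → τ k ≤ τ l := by
            intro k l hkl hlJ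
            induction l with
            | zero => rw [Nat.le_zero.mp hkl]
            | succ l ihl =>
              rcases Nat.lt_or_ge k (l + 1) with h5 | h5
              · exact (ihl (Nat.lt_succ_iff.mp h5) ((Nat.le_succ l).trans hlJ)).trans
                  (hτmono l (Nat.succ_le_succ_iff.mp hlJ))
              · rw [Nat.le_antisymm hkl h5]
          exact hmon (i + 1) (J + 1) (Nat.succ_le_succ hiJ) le_rfl
        exact ((hiff (τ (i + 1)) i).mpr ⟨hiJ, hstep, le_rfl⟩).1
      have hseg := seg hNopen hVcont hVlip h22a hLrcl hsol hcon hstep hdi hd2 hLri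
      have hyLr : s.toFun (τ (i + 1)) i ∈ sublevel V N r := hseg _ ⟨hstep, le_rfl⟩
      have hVy : V (s.toFun (τ (i + 1)) i) ≤ V (s.toFun (τ i) i) := by
        apply flow_mono hNopen hVcont hVlip h22a hsol hstep hdi hd2
        · intro z hz
          exact (hseg z hz).1
        · intro z hz
          exact hcon z i (mem_dom_Icc s hdi hd2 hstep z hz)
      have hd3 : (τ (i + 1), i + 1) ∈ s.dom :=
        ((hiff (τ (i + 1)) (i + 1)).mpr ⟨hi, le_rfl, hτmono (i + 1) hi⟩).1
      obtain ⟨hyD, hzG⟩ := hsol.jump (τ (i + 1)) i hd2 hd3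
      have hyN : s.toFun (τ (i + 1)) i ∈ N := hyLr.1
      have hyK : s.toFun (τ (i + 1)) i ∉ K := hcon _ _ hd2
      have hzN : s.toFun (τ (i + 1)) (i + 1) ∈ N := hGN _ hyN hzG
      have hdrop := h22b _ ⟨⟨hyD, hyN⟩, hyK⟩ _ hzG
      have hcy : c ≤ V (s.toFun (τ (i + 1)) i) := by
        by_contra hlt2
        push_neg at hlt2
        have h6 : V (s.toFun (τ (i + 1)) (i + 1)) ≤ 0 := by
          rw [min_eq_right hlt2.le] at hdrop
          linarith
        have hz0 : V (s.toFun (τ (i + 1)) (i + 1)) = 0 :=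
          le_antisymm h6 (hVnn _ hzN)
        have hzK : s.toFun (τ (i + 1)) (i + 1) ∉ K := hcon _ _ hd3
        exact absurd hz0 (ne_of_gt (hpd.2 _ ⟨hzN, hzK⟩))
      have hVz : V (s.toFun (τ (i + 1)) (i + 1)) ≤ V (s.toFun (τ (i + 1)) i) - c := by
        rw [min_eq_left hcy] at hdrop
        linarith
      refine ⟨hd3, ⟨hzN, ?_⟩, ?_⟩
      · exact le_trans (ENNReal.ofReal_le_ofReal (by linarith)) hyLr.2
      · have h7 : V (s.toFun (τ (i + 1)) i) ≤ V x0 - (i : ℝ) * c := le_trans hVy hVi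
        push_cast
        linarith
  obtain ⟨hdm, hLm, hVm⟩ := chain m hmJ
  have hceil : V x0 / c ≤ (m : ℝ) := Nat.le_ceil _
  have hge : V x0 ≤ (m : ℝ) * c := by
    rw [div_le_iff₀ hc] at hceil
    linarith
  have hposm : 0 < V (s.toFun (τ m) m) := hpd.2 _ ⟨hLm.1, hcon _ _ hdm⟩
  linarith
end
end

section
/- Consider the bouncing ball hybrid system H = (C,F,D,G) on X = ℝ² with state x = (x₁,x₂), flow map F(x) = {(x₂, −γ)} on the flow set C = {x ∈ ℝ² : x₁ ≥ 0}, and jump map G(x) = {(0, −λx₂)} on the jump set D = {x ∈ ℝ² : x₁ = 0, x₂ ≤ 0}, where γ > 0 and λ ∈ [0,1]. Let K = {x ∈ C ∪ D : 2γx₁ + (x₂ − 1)(x₂ + 1) ≤ 0}, i.e., the sublevel set where the total energy γx₁ + x₂²/2 is at most 1/2. Then K is forward pre-invariant for H: every solution φ to H with φ(0,0) ∈ K satisfies φ(t,j) ∈ K for all (t,j) ∈ dom φ. -/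
open Set Filter Topology MeasureTheory
open scoped ENNReal NNReal

noncomputable section

variable {n : ℕ}

/-- Auxiliary: along a flow interval of the bouncing ball, membership in the
energy sublevel set `K` is preserved. -/
lemma bb_flow_K {γ : ℝ} (hγ : 0 < γ) (H : HybridSystem 2)
    (hC : H.C = {x : ES 2 | 0 ≤ x 0})
    (hF : ∀ x : ES 2, H.F x = {v : ES 2 | v 0 = x 1 ∧ v 1 = -γ})
    (K : Set (ES 2))
    (hK : K = {x ∈ H.C ∪ H.D | 2 * γ * x 0 + (x 1 - 1) * (x 1 + 1) ≤ 0})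
    (s : HybridArc 2) (hs : IsSolution H s)
    (j : ℕ) (a b : ℝ) (hab : a ≤ b)
    (hdom : ∀ u ∈ Icc a b, (u, j) ∈ s.dom)
    (hKa : s.toFun a j ∈ K) : s.toFun b j ∈ K := by
  obtain ⟨f, hCmem, hae, hint⟩ := hs.flow j
  have hma : (a, j) ∈ s.dom := hdom a ⟨le_refl a, hab⟩
  -- component 1 formula
  have claim1 : ∀ t ∈ Icc a b, s.toFun t j 1 = s.toFun a j 1 - γ * (t - a) := by
    intro t ht
    obtain ⟨hfi, heq⟩ := hint a t hma (hdom t ht)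
    have hsub : Set.uIoc a t ⊆ Icc a b := by
      rw [uIoc_of_le ht.1]
      exact fun u hu => ⟨le_of_lt hu.1, hu.2.trans ht.2⟩
    have hae1 : ∀ᵐ u ∂(volume : Measure ℝ), u ∈ Set.uIoc a t → f u 1 = -γ := by
      filter_upwards [hae] with u hu hmem
      have h2 := hu (hdom u (hsub hmem))
      rw [hF] at h2
      exact h2.2
    have h3 : (∫ u in a..t, f u) 1 = ∫ u in a..t, f u 1 := by
      simpa using ((EuclideanSpace.proj (1 : Fin 2)).intervalIntegral_comp_comm
        (μ := volume) hfi).symm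
    have h4 : ∫ u in a..t, f u 1 = ∫ u in a..t, (-γ : ℝ) :=
      intervalIntegral.integral_congr_ae hae1
    have h5 := congrArg (fun v : ES 2 => v 1) heq
    simp only [PiLp.add_apply] at h5
    rw [h5, h3, h4, intervalIntegral.integral_const]
    simp [smul_eq_mul]
    ring
  -- component 0 formula
  have claim0 : ∀ t ∈ Icc a b,
      s.toFun t j 0 = s.toFun a j 0 + s.toFun a j 1 * (t - a) - γ * (t - a) ^ 2 / 2 := by
    intro t ht
    obtain ⟨hfi, heq⟩ := hint a t hma (hdom t ht)
    have hsub : Set.uIoc a t ⊆ Icc a b := by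
      rw [uIoc_of_le ht.1]
      exact fun u hu => ⟨le_of_lt hu.1, hu.2.trans ht.2⟩
    have hae0 : ∀ᵐ u ∂(volume : Measure ℝ), u ∈ Set.uIoc a t →
        f u 0 = s.toFun a j 1 - γ * (u - a) := by
      filter_upwards [hae] with u hu hmem
      have h2 := hu (hdom u (hsub hmem))
      rw [hF] at h2
      rw [h2.1, claim1 u (hsub hmem)]
    have h3 : (∫ u in a..t, f u) 0 = ∫ u in a..t, f u 0 := by
      simpa using ((EuclideanSpace.proj (0 : Fin 2)).intervalIntegral_comp_comm
        (μ := volume) hfi).symm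
    have h4 : ∫ u in a..t, f u 0 = ∫ u in a..t, (s.toFun a j 1 - γ * (u - a)) :=
      intervalIntegral.integral_congr_ae hae0
    have h6 : ∫ u in a..t, (s.toFun a j 1 - γ * (u - a))
        = s.toFun a j 1 * (t - a) - γ * (t - a) ^ 2 / 2 := by
      have hi1 : IntervalIntegrable (fun _ : ℝ => s.toFun a j 1) volume a t :=
        intervalIntegrable_const
      have hi2 : IntervalIntegrable (fun u : ℝ => γ * (u - a)) volume a t :=
        ((continuous_const.mul (continuous_id.sub continuous_const))).intervalIntegrable a t
      rw [intervalIntegral.integral_sub hi1 hi2, intervalIntegral.integral_const,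
        intervalIntegral.integral_const_mul]
      have h7 : ∫ u in a..t, (u - a) = (t ^ 2 - a ^ 2) / 2 - (t - a) * a := by
        have hi3 : IntervalIntegrable (fun u : ℝ => u) volume a t :=
          continuous_id.intervalIntegrable a t
        have hi4 : IntervalIntegrable (fun _ : ℝ => a) volume a t := intervalIntegrable_const
        rw [intervalIntegral.integral_sub hi3 hi4, integral_id, intervalIntegral.integral_const]
        simp [smul_eq_mul]
      rw [h7]
      simp [smul_eq_mul]
      ring
    have h5 := congrArg (fun v : ES 2 => v 0) heq
    simp only [PiLp.add_apply] at h5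
    rw [h5, h3, h4, h6]
    ring
  -- energy at b
  rw [hK] at hKa ⊢
  have hEa := hKa.2
  have hb1 := claim1 b ⟨hab, le_refl b⟩
  have hb0 := claim0 b ⟨hab, le_refl b⟩
  constructor
  · -- membership in C ∪ D
    rcases eq_or_lt_of_le hab with heq | hlt
    · subst heq; exact hKa.1
    · left
      rw [hC]
      show (0 : ℝ) ≤ s.toFun b j 0
      rw [hb0]
      set p : ℝ → ℝ := fun u =>
        s.toFun a j 0 + s.toFun a j 1 * (u - a) - γ * (u - a) ^ 2 / 2 with hp
      have hpos : ∀ u ∈ Ioo a b, 0 ≤ p u := by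
        intro u hu
        have hintmem : u ∈ interior {t : ℝ | (t, j) ∈ s.dom} := by
          have hsub2 : Icc a b ⊆ {t : ℝ | (t, j) ∈ s.dom} := fun v hv => hdom v hv
          have hu2 : u ∈ interior (Icc a b) := by rw [interior_Icc]; exact hu
          exact interior_mono hsub2 hu2
        have hCu := hCmem u hintmem
        rw [hC] at hCu
        have := claim0 u ⟨le_of_lt hu.1, le_of_lt hu.2⟩
        rw [hp]; dsimp only
        rw [← this]
        exact hCu
      have hcp : Continuous p := by
        rw [hp]; fun_prop
      have htend : Tendsto p (𝓝[<] b) (𝓝 (p b)) :=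
        (hcp.tendsto b).mono_left nhdsWithin_le_nhds
      have hev : ∀ᶠ u in 𝓝[<] b, 0 ≤ p u := by
        filter_upwards [Ioo_mem_nhdsLT_of_mem (⟨hlt, le_refl b⟩ : b ∈ Ioc a b)] with u hu
        exact hpos u hu
      exact ge_of_tendsto htend hev
  · -- energy bound
    show 2 * γ * s.toFun b j 0 + (s.toFun b j 1 - 1) * (s.toFun b j 1 + 1) ≤ 0
    rw [hb0, hb1]
    nlinarith [hEa]

/-- the energy sublevel set `K` of the bouncing ball is forward
pre-invariant. -/
theorem bouncing_ball_forward_pre_invariant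
    (γ lam : ℝ) (hγ : 0 < γ) (hlam : lam ∈ Icc (0 : ℝ) 1)
    (H : HybridSystem 2)
    (hX : H.X = univ)
    (hC : H.C = {x : ES 2 | 0 ≤ x 0})
    (hF : ∀ x : ES 2, H.F x = {v : ES 2 | v 0 = x 1 ∧ v 1 = -γ})
    (hD : H.D = {x : ES 2 | x 0 = 0 ∧ x 1 ≤ 0})
    (hG : ∀ x : ES 2, H.G x = {v : ES 2 | v 0 = 0 ∧ v 1 = -lam * x 1})
    (K : Set (ES 2))
    (hK : K = {x ∈ H.C ∪ H.D | 2 * γ * x 0 + (x 1 - 1) * (x 1 + 1) ≤ 0}) :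
    ∀ s : HybridArc 2, IsSolution H s → s.toFun 0 0 ∈ K →
      ∀ q ∈ s.dom, s.toFun q.1 q.2 ∈ K := by
  intro s hs hK0 q hq
  obtain ⟨t, j⟩ := q
  obtain ⟨τ, hτ0, hτend0, hτmono, hmemb⟩ := s.htd.2 (t, j) hq
  have hτend : τ (j + 1) = t := hτend0
  -- τ is monotone up to j+1
  have hmono : ∀ k, k ≤ j + 1 → ∀ i, i ≤ k → τ i ≤ τ k := by
    intro k
    induction k with
    | zero => intro _ i hi; simp [Nat.le_zero.mp hi]
    | succ k ih =>
      intro hk i hi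
      rcases Nat.lt_succ_iff_lt_or_eq.mp (Nat.lt_succ_of_le hi) with h | h
      · exact le_trans (ih (by omega) i (by omega)) (hτmono k (by omega))
      · exact le_of_eq (congrArg τ h)
  have hdomIcc : ∀ j', j' ≤ j → ∀ u ∈ Icc (τ j') (τ (j' + 1)), (u, j') ∈ s.dom := by
    intro j' hj' u hu
    exact ((hmemb u j').mpr ⟨hj', hu.1, hu.2⟩).1
  have hKτ : ∀ j', j' ≤ j → s.toFun (τ j') j' ∈ K := by
    intro j'
    induction j' with
    | zero => intro _; rw [hτ0]; exact hK0
    | succ i ih =>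
      intro h
      have hi : i ≤ j := by omega
      have hKend : s.toFun (τ (i + 1)) i ∈ K :=
        bb_flow_K hγ H hC hF K hK s hs i (τ i) (τ (i + 1)) (hτmono i hi)
          (hdomIcc i hi) (ih hi)
      have hd1 : (τ (i + 1), i) ∈ s.dom :=
        hdomIcc i hi (τ (i + 1)) ⟨hτmono i hi, le_refl _⟩
      have hd2 : (τ (i + 1), i + 1) ∈ s.dom :=
        hdomIcc (i + 1) h (τ (i + 1)) ⟨le_refl _, hτmono (i + 1) h⟩
      obtain ⟨hD1, hG1⟩ := hs.jump (τ (i + 1)) i hd1 hd2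
      rw [hG (s.toFun (τ (i + 1)) i)] at hG1
      rw [hD] at hD1
      obtain ⟨hx0, hx1⟩ := hD1
      rw [hK] at hKend ⊢
      have hE := hKend.2
      rw [hx0] at hE
      constructor
      · left
        rw [hC]
        show (0 : ℝ) ≤ s.toFun (τ (i + 1)) (i + 1) 0
        rw [hG1.1]
      · show 2 * γ * s.toFun (τ (i + 1)) (i + 1) 0 +
          (s.toFun (τ (i + 1)) (i + 1) 1 - 1) * (s.toFun (τ (i + 1)) (i + 1) 1 + 1) ≤ 0
        rw [hG1.1, hG1.2]
        have h1 := hlam.1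
        have h2 := hlam.2
        nlinarith [sq_nonneg (s.toFun (τ (i + 1)) i 1), sq_nonneg lam,
          sq_nonneg (lam * s.toFun (τ (i + 1)) i 1)]
  -- final flow from (τ j, j) to (t, j)
  have hfin : ∀ u ∈ Icc (τ j) t, (u, j) ∈ s.dom := by
    intro u hu
    exact hdomIcc j (le_refl j) u ⟨hu.1, hτend ▸ hu.2⟩
  have htj : τ j ≤ t := hτend ▸ hτmono j (le_refl j)
  exact bb_flow_K hγ H hC hF K hK s hs j (τ j) t htj hfin (hKτ j (le_refl j))
end
end
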